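/- arXiv:2005.03340 — 11 statements merged into one kernel-verified Lean document; each statement's English description precedes it below -/
import Mathlib

section
/- Let SVI(k) = a + b(ρ(k−m) + √((k−m)² + σ²)) with b > 0, ρ ∈ (−1,1), σ > 0, a, m ∈ ℝ and a + bσ√(1−ρ²) > 0 (so SVI(k) > 0 for all k). Define d₁(k) = −k/√(SVI(k)) + √(SVI(k))/2. Then, as k → +∞, d₁(k) converges to −∞ if b(1+ρ) < 2, to 0 if b(1+ρ) = 2, and to +∞ if b(1+ρ) > 2. -/
open Filter Real

private lemma sqrt_tendsto_atTop' : Filter.Tendsto Real.sqrt Filter.atTop Filter.atTop := by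
  rw [Filter.tendsto_atTop_atTop]
  intro B
  refine ⟨max 0 (B ^ 2), fun x hx => ?_⟩
  have h0 : (0 : ℝ) ≤ x := le_trans (le_max_left _ _) hx
  have h1 : B ^ 2 ≤ x := le_trans (le_max_right _ _) hx
  rcases le_or_gt B 0 with hB | hB
  · exact le_trans hB (Real.sqrt_nonneg x)
  · rw [show B = Real.sqrt (B ^ 2) by rw [Real.sqrt_sq hB.le]]
    exact Real.sqrt_le_sqrt h1

/-- Limit of the Black–Scholes coefficient `d₁` along the SVI smile
as the log-forward moneyness `k → +∞`, in the three regimes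
`b(1+ρ) < 2`, `b(1+ρ) = 2`, `b(1+ρ) > 2`. -/
theorem svi_d1_limit_at_top
    (a b ρ m σ : ℝ) (hb : 0 < b) (hρ₁ : -1 < ρ) (hρ₂ : ρ < 1) (hσ : 0 < σ)
    (ha : 0 < a + b * σ * Real.sqrt (1 - ρ ^ 2))
    (SVI : ℝ → ℝ)
    (hSVI : ∀ k, SVI k = a + b * (ρ * (k - m) + Real.sqrt ((k - m) ^ 2 + σ ^ 2)))
    (hSVIpos : ∀ k, 0 < SVI k)
    (d₁ : ℝ → ℝ)
    (hd₁ : ∀ k, d₁ k = -k / Real.sqrt (SVI k) + Real.sqrt (SVI k) / 2) :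
    (b * (1 + ρ) < 2 → Filter.Tendsto d₁ Filter.atTop Filter.atBot) ∧
    (b * (1 + ρ) = 2 → Filter.Tendsto d₁ Filter.atTop (nhds 0)) ∧
    (2 < b * (1 + ρ) → Filter.Tendsto d₁ Filter.atTop Filter.atTop) := by
  set c : ℝ := b * (1 + ρ) with hc
  have hcpos : 0 < c := mul_pos hb (by linarith)
  -- two-sided linear bounds on SVI for k ≥ m
  have hbounds : ∀ k, m ≤ k →
      a + c * (k - m) ≤ SVI k ∧ SVI k ≤ a + c * (k - m) + b * σ := by
    intro k hk
    have hx : 0 ≤ k - m := by linarith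
    have h1 : k - m ≤ Real.sqrt ((k - m) ^ 2 + σ ^ 2) := by
      have := Real.sqrt_le_sqrt (show (k - m) ^ 2 ≤ (k - m) ^ 2 + σ ^ 2 by nlinarith)
      rwa [Real.sqrt_sq hx] at this
    have h2 : Real.sqrt ((k - m) ^ 2 + σ ^ 2) ≤ (k - m) + σ := by
      have := Real.sqrt_le_sqrt (show (k - m) ^ 2 + σ ^ 2 ≤ ((k - m) + σ) ^ 2 by nlinarith)
      rwa [Real.sqrt_sq (by linarith)] at this
    rw [hSVI k]
    constructor <;> nlinarith
  -- SVI tends to atTop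
  have hStop : Tendsto SVI atTop atTop := by
    have hlin : Tendsto (fun k : ℝ => a + c * (k - m)) atTop atTop := by
      apply tendsto_atTop_add_const_left
      exact (tendsto_atTop_add_const_right _ (-m) tendsto_id).const_mul_atTop hcpos
    refine tendsto_atTop_mono' atTop ?_ hlin
    filter_upwards [eventually_ge_atTop m] with k hk
    exact (hbounds k hk).1
  -- sqrt of SVI tends to atTop
  have hsqrtTop : Tendsto (fun k => Real.sqrt (SVI k)) atTop atTop :=
    sqrt_tendsto_atTop'.comp hStop
  -- SVI k / k → c
  have hratio : Tendsto (fun k => SVI k / k) atTop (nhds c) := by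
    have hlow : Tendsto (fun k : ℝ => (a - c * m) / k + c) atTop (nhds c) := by
      have := (tendsto_const_nhds (x := a - c * m) (f := atTop (α := ℝ))).div_atTop
        tendsto_id
      simpa using this.add_const c
    have hhigh : Tendsto (fun k : ℝ => (a - c * m + b * σ) / k + c) atTop (nhds c) := by
      have := (tendsto_const_nhds (x := a - c * m + b * σ) (f := atTop (α := ℝ))).div_atTop
        tendsto_id
      simpa using this.add_const c
    refine tendsto_of_tendsto_of_tendsto_of_le_of_le' hlow hhigh ?_ ?_
    · filter_upwards [eventually_ge_atTop m, eventually_gt_atTop 0] with k hk hk0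
      have := (hbounds k hk).1
      rw [div_add' _ _ _ (ne_of_gt hk0), div_le_div_iff₀ hk0 hk0]
      nlinarith
    · filter_upwards [eventually_ge_atTop m, eventually_gt_atTop 0] with k hk hk0
      have := (hbounds k hk).2
      rw [div_add' _ _ _ (ne_of_gt hk0), div_le_div_iff₀ hk0 hk0]
      nlinarith
  -- k / SVI k → c⁻¹
  have hratio' : Tendsto (fun k => k / SVI k) atTop (nhds c⁻¹) := by
    have := hratio.inv₀ (ne_of_gt hcpos)
    refine this.congr' ?_
    filter_upwards [eventually_gt_atTop 0] with k hk0
    rw [inv_div]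
  -- rewriting d₁
  have hd₁' : ∀ k, d₁ k = Real.sqrt (SVI k) * (1 / 2 - k / SVI k) := by
    intro k
    have hS := hSVIpos k
    have hs : Real.sqrt (SVI k) * Real.sqrt (SVI k) = SVI k :=
      Real.mul_self_sqrt hS.le
    have hs0 : Real.sqrt (SVI k) ≠ 0 := by positivity
    rw [hd₁ k]
    field_simp
    linear_combination (2 * k) * hs
  refine ⟨?_, ?_, ?_⟩
  · -- subcritical: c < 2
    intro hlt
    have hlim : Tendsto (fun k => 1 / 2 - k / SVI k) atTop (nhds (1 / 2 - c⁻¹)) :=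
      (tendsto_const_nhds).sub hratio'
    have hneg : 1 / 2 - c⁻¹ < 0 := by
      have : (2 : ℝ)⁻¹ < c⁻¹ := by
        apply inv_strictAnti₀ hcpos hlt
      simp only [one_div]
      linarith
    exact (Tendsto.congr (fun k => (hd₁' k).symm)) (hsqrtTop.atTop_mul_neg hneg hlim)
  · -- critical: c = 2
    intro heq
    have key : ∀ᶠ k in atTop, ‖d₁ k‖ ≤ (|a - 2 * m| + b * σ) * (Real.sqrt (SVI k))⁻¹ := by
      filter_upwards [eventually_ge_atTop m] with k hk
      obtain ⟨h1, h2⟩ := hbounds k hk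
      rw [heq] at h1 h2
      have hS := hSVIpos k
      have hs0 : (0 : ℝ) < Real.sqrt (SVI k) := Real.sqrt_pos.mpr hS
      have hs : Real.sqrt (SVI k) * Real.sqrt (SVI k) = SVI k :=
        Real.mul_self_sqrt hS.le
      have hnum : |SVI k - 2 * k| ≤ |a - 2 * m| + b * σ := by
        rw [abs_le]
        constructor
        · have := neg_abs_le (a - 2 * m); nlinarith
        · have := le_abs_self (a - 2 * m); nlinarith
      have hrw : d₁ k = (SVI k - 2 * k) / (2 * Real.sqrt (SVI k)) := by
        rw [hd₁ k]
        field_simp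
        linarith [hs]
      rw [hrw, Real.norm_eq_abs, abs_div, abs_of_pos (by positivity : (0:ℝ) < 2 * Real.sqrt (SVI k))]
      rw [div_le_iff₀ (by positivity)]
      calc |SVI k - 2 * k| ≤ |a - 2 * m| + b * σ := hnum
        _ ≤ (|a - 2 * m| + b * σ) * (Real.sqrt (SVI k))⁻¹ * (2 * Real.sqrt (SVI k)) := by
            have h2' : (Real.sqrt (SVI k))⁻¹ * (2 * Real.sqrt (SVI k)) = 2 := by
              field_simp
            rw [mul_assoc, h2']
            nlinarith [abs_nonneg (a - 2 * m), mul_pos hb hσ]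
    have hlim0 : Tendsto (fun k => (|a - 2 * m| + b * σ) * (Real.sqrt (SVI k))⁻¹)
        atTop (nhds 0) := by
      have := hsqrtTop.inv_tendsto_atTop
      simpa using this.const_mul (|a - 2 * m| + b * σ)
    exact squeeze_zero_norm' key hlim0
  · -- supercritical: 2 < c
    intro hgt
    have hlim : Tendsto (fun k => 1 / 2 - k / SVI k) atTop (nhds (1 / 2 - c⁻¹)) :=
      (tendsto_const_nhds).sub hratio'
    have hpos : 0 < 1 / 2 - c⁻¹ := by
      have : c⁻¹ < (2 : ℝ)⁻¹ := by
        apply inv_strictAnti₀ (by norm_num) hgt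
      simp only [one_div]
      linarith
    exact (Tendsto.congr (fun k => (hd₁' k).symm)) (hsqrtTop.atTop_mul_pos hpos hlim)
end

section
/- Let S₀ > 0 and let σ: ℝ → (0,∞) be differentiable. For k ∈ ℝ set d₁(k) = −k/σ(k) + σ(k)/2, d₂(k) = −k/σ(k) − σ(k)/2, f₁(k) = −d₁(k), f₂(k) = −d₂(k). Define the Black–Scholes Put price P(K) = S₀ e^k Φ(−d₂(k)) − S₀ Φ(−d₁(k)) with k = log(K/S₀), for K > 0, where Φ is the standard normal cumulative distribution function. If K ↦ P(K) is convex on (0,∞), then f₁ and f₂ are strictly increasing; more precisely, for every k, f₁'(k) = (1/σ(k))(1 − σ'(k) f₂(k)) > 0 and f₂'(k) = (1/σ(k))(1 − σ'(k) f₁(k)) > 0. -/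
/-- The standard normal cumulative distribution function
`Φ(x) = ∫_{-∞}^{x} e^{-t²/2}/√(2π) dt`. -/
noncomputable def stdNormalCDF (x : ℝ) : ℝ :=
  ∫ t in Set.Iic x, Real.exp (-(t ^ 2) / 2) / Real.sqrt (2 * Real.pi)

open MeasureTheory Real Set Filter Topology

noncomputable def gpdf (x : ℝ) : ℝ := Real.exp (-(x ^ 2) / 2) / Real.sqrt (2 * Real.pi)

lemma gpdf_pos (x : ℝ) : 0 < gpdf x :=
  div_pos (Real.exp_pos _) (Real.sqrt_pos.2 (by positivity))

lemma gpdf_even (x : ℝ) : gpdf (-x) = gpdf x := by simp [gpdf]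

lemma gpdf_cont : Continuous gpdf := by
  unfold gpdf; fun_prop

lemma gpdf_integrable : Integrable gpdf := by
  have h : Integrable (fun x : ℝ => Real.exp (-(1/2) * x ^ 2)) := integrable_exp_neg_mul_sq (by norm_num)
  have := h.div_const (Real.sqrt (2 * Real.pi))
  refine this.congr ?_
  filter_upwards with x
  simp only [gpdf]; ring_nf

lemma gpdf_integral_total : ∫ x, gpdf x = 1 := by
  have h : ∫ x : ℝ, Real.exp (-(1/2 : ℝ) * x ^ 2) = Real.sqrt (π / (1/2)) :=
    integral_gaussian (1/2 : ℝ)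
  have h2 : ∫ x, gpdf x = (∫ x : ℝ, Real.exp (-(1/2 : ℝ) * x ^ 2)) / Real.sqrt (2 * Real.pi) := by
    rw [← integral_div]
    congr 1; ext x; simp [gpdf]; ring_nf
  rw [h2, h]
  rw [div_eq_one_iff_eq (by positivity)]
  congr 1; ring

lemma stdNormalCDF_eq (x : ℝ) : stdNormalCDF x = ∫ t in Set.Iic x, gpdf t := rfl

lemma hasDerivAt_stdNormalCDF (x : ℝ) : HasDerivAt stdNormalCDF (gpdf x) x := by
  have hint : ∀ y : ℝ, IntervalIntegrable gpdf volume 0 y :=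
    fun y => gpdf_integrable.intervalIntegrable
  have hd : HasDerivAt (fun u => ∫ t in (0:ℝ)..u, gpdf t) (gpdf x) x :=
    intervalIntegral.integral_hasDerivAt_right (hint x)
      (gpdf_cont.stronglyMeasurableAtFilter _ _) gpdf_cont.continuousAt
  have heq : ∀ u : ℝ, stdNormalCDF u = (∫ t in (0:ℝ)..u, gpdf t) + stdNormalCDF 0 := by
    intro u
    have := intervalIntegral.integral_Iic_sub_Iic (μ := volume) (f := gpdf)
      (gpdf_integrable.integrableOn) (gpdf_integrable.integrableOn) (a := (0:ℝ)) (b := u)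
    rw [stdNormalCDF_eq, stdNormalCDF_eq, ← this]; ring
  have : HasDerivAt (fun u => (∫ t in (0:ℝ)..u, gpdf t) + stdNormalCDF 0) (gpdf x) x :=
    hd.add_const _
  exact this.congr_deriv rfl |>.congr_of_eventuallyEq (by filter_upwards with u; rw [heq u])

lemma stdNormalCDF_nonneg (x : ℝ) : 0 ≤ stdNormalCDF x :=
  setIntegral_nonneg measurableSet_Iic (fun t _ => (gpdf_pos t).le)

lemma stdNormalCDF_pos (x : ℝ) : 0 < stdNormalCDF x := by
  rw [stdNormalCDF_eq]
  refine (setIntegral_pos_iff_support_of_nonneg_ae ?_ ?_).2 ?_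
  · filter_upwards with t; exact (gpdf_pos t).le
  · exact gpdf_integrable.integrableOn
  · have : Function.support gpdf = Set.univ := by
      ext t; simp [Function.mem_support, (gpdf_pos t).ne']
    rw [this, Set.univ_inter]
    simp [Real.volume_Iic]

lemma stdNormalCDF_le_one (x : ℝ) : stdNormalCDF x ≤ 1 := by
  rw [stdNormalCDF_eq, ← gpdf_integral_total]
  exact setIntegral_le_integral gpdf_integrable (by filter_upwards with t; exact (gpdf_pos t).le)

lemma stdNormalCDF_neg (x : ℝ) : stdNormalCDF (-x) = 1 - stdNormalCDF x := by
  have h1 : stdNormalCDF (-x) = ∫ t in Set.Ioi x, gpdf t := by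
    rw [stdNormalCDF_eq]
    have he : ∫ t in Set.Iic (-x), gpdf t = ∫ t in Set.Iic (-x), gpdf (-t) := by
      simp_rw [gpdf_even]
    rw [he, integral_comp_neg_Iic, neg_neg]
  have h2 : stdNormalCDF x + ∫ t in Set.Ioi x, gpdf t = 1 := by
    rw [stdNormalCDF_eq, ← gpdf_integral_total]
    exact intervalIntegral.integral_Iic_add_Ioi gpdf_integrable.integrableOn gpdf_integrable.integrableOn
  linarith

lemma hasDerivAt_gpdf (x : ℝ) : HasDerivAt gpdf (-x * gpdf x) x := by
  have h1 : HasDerivAt (fun t : ℝ => -(t ^ 2) / 2) (-x) x := by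
    have := ((hasDerivAt_pow 2 x).neg).div_const 2
    simpa using this.congr_deriv (by push_cast; ring)
  have h2 : HasDerivAt (fun t : ℝ => Real.exp (-(t ^ 2) / 2)) (Real.exp (-(x ^ 2) / 2) * (-x)) x :=
    (Real.hasDerivAt_exp _).comp x h1
  have h3 := h2.div_const (Real.sqrt (2 * Real.pi))
  exact h3.congr_deriv (by unfold gpdf; ring)

lemma stdNormalCDF_le_exp (x : ℝ) : stdNormalCDF x ≤ Real.exp (1/2) / Real.sqrt (2 * Real.pi) * Real.exp x := by
  have hC : (0:ℝ) < Real.sqrt (2 * Real.pi) := Real.sqrt_pos.2 (by positivity)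
  have hpt : ∀ t : ℝ, gpdf t ≤ Real.exp (1/2) / Real.sqrt (2 * Real.pi) * Real.exp t := by
    intro t
    unfold gpdf
    rw [div_mul_eq_mul_div, div_le_div_iff_of_pos_right hC, ← Real.exp_add]
    exact Real.exp_le_exp.2 (by nlinarith [sq_nonneg (t+1)])
  calc stdNormalCDF x ≤ ∫ t in Set.Iic x, Real.exp (1/2) / Real.sqrt (2 * Real.pi) * Real.exp t := by
        refine setIntegral_mono_on gpdf_integrable.integrableOn
          (((integrableOn_exp_Iic x).const_mul _)) measurableSet_Iic (fun t _ => hpt t)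
    _ = Real.exp (1/2) / Real.sqrt (2 * Real.pi) * Real.exp x := by
        rw [integral_const_mul, integral_exp_Iic]

lemma tendsto_gpdf_atBot : Tendsto gpdf atBot (𝓝 0) := by
  have h0 : Tendsto (fun x : ℝ => x ^ 2) atBot atTop := by
    have h1 : Tendsto (fun x : ℝ => (-x) ^ 2) atBot atTop :=
      (tendsto_pow_atTop two_ne_zero).comp tendsto_neg_atBot_atTop
    refine h1.congr (fun x => by rw [neg_sq])
  have h2 : Tendsto (fun x : ℝ => -(x ^ 2) / 2) atBot atBot := by
    apply Filter.Tendsto.atBot_div_const (by norm_num : (0:ℝ) < 2)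
    exact tendsto_neg_atTop_atBot.comp h0
  have h3 : Tendsto (fun x : ℝ => Real.exp (-(x ^ 2) / 2)) atBot (𝓝 0) :=
    Real.tendsto_exp_atBot.comp h2
  have h4 := h3.div_const (Real.sqrt (2 * Real.pi))
  rw [zero_div] at h4
  exact h4

lemma tendsto_mul_cdf_atBot : Tendsto (fun x => x * stdNormalCDF x) atBot (𝓝 0) := by
  set C := Real.exp (1/2) / Real.sqrt (2 * Real.pi) with hC
  have hCpos : 0 < C := by positivity
  have hup : ∀ᶠ x in atBot, x * stdNormalCDF x ≤ 0 := by
    filter_upwards [eventually_le_atBot (0:ℝ)] with x hx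
    exact mul_nonpos_iff.2 (Or.inr ⟨hx, stdNormalCDF_nonneg x⟩)
  have hlo : ∀ᶠ x in atBot, C * (x * Real.exp x) ≤ x * stdNormalCDF x := by
    filter_upwards [eventually_le_atBot (0:ℝ)] with x hx
    have := stdNormalCDF_le_exp x
    calc C * (x * Real.exp x) = x * (C * Real.exp x) := by ring
      _ ≤ x * stdNormalCDF x := by
        apply mul_le_mul_of_nonpos_left _ hx
        simpa [hC] using this
  have hxe : Tendsto (fun x : ℝ => x * Real.exp x) atBot (𝓝 0) := by
    have h1 : Tendsto (fun y : ℝ => -(y ^ 1 * Real.exp (-y))) atTop (𝓝 (-0)) :=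
      (Real.tendsto_pow_mul_exp_neg_atTop_nhds_zero 1).neg
    have h2 := h1.comp tendsto_neg_atBot_atTop
    rw [neg_zero] at h2
    refine h2.congr (fun x => ?_)
    simp only [Function.comp, pow_one, neg_neg]
    ring
  have hlim : Tendsto (fun x : ℝ => C * (x * Real.exp x)) atBot (𝓝 0) := by
    simpa using hxe.const_mul C
  exact tendsto_of_tendsto_of_tendsto_of_le_of_le' hlim tendsto_const_nhds hlo hup

lemma mills_pos (x : ℝ) : 0 < gpdf x + x * stdNormalCDF x := by
  set M := fun x => gpdf x + x * stdNormalCDF x with hM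
  have hd : ∀ y, HasDerivAt M (stdNormalCDF y) y := by
    intro y
    have h1 := (hasDerivAt_gpdf y).add
      ((hasDerivAt_id y).mul (hasDerivAt_stdNormalCDF y))
    exact h1.congr_deriv (by simp only [id_eq, one_mul]; ring)
  have hmono : StrictMono M :=
    strictMono_of_deriv_pos (fun y => by rw [(hd y).deriv]; exact stdNormalCDF_pos y)
  have hlim : Tendsto M atBot (𝓝 0) := by
    simpa using tendsto_gpdf_atBot.add tendsto_mul_cdf_atBot
  have hge : 0 ≤ M (x - 1) := by
    refine le_of_tendsto hlim ?_
    filter_upwards [eventually_le_atBot (x-1)] with y hy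
    exact hmono.monotone hy
  calc (0:ℝ) ≤ M (x-1) := hge
    _ < M x := hmono (by linarith)

lemma G_mono : StrictMono (fun x => Real.exp (x ^ 2 / 2) * stdNormalCDF x) := by
  apply strictMono_of_deriv_pos
  intro x
  have h1 : HasDerivAt (fun t : ℝ => t ^ 2 / 2) x x := by
    have := (hasDerivAt_pow 2 x).div_const 2
    exact this.congr_deriv (by push_cast; ring)
  have h2 : HasDerivAt (fun t : ℝ => Real.exp (t ^ 2 / 2)) (Real.exp (x ^ 2 / 2) * x) x :=
    (Real.hasDerivAt_exp _).comp x h1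
  have h3 := h2.mul (hasDerivAt_stdNormalCDF x)
  rw [(show HasDerivAt (fun x => Real.exp (x ^ 2 / 2) * stdNormalCDF x) _ x from h3).deriv]
  have hmills := mills_pos x
  have hexp : Real.exp (x ^ 2 / 2) * gpdf x = Real.exp (x ^ 2 / 2) * gpdf x := rfl
  have : Real.exp (x ^ 2 / 2) * x * stdNormalCDF x + Real.exp (x ^ 2 / 2) * gpdf x
      = Real.exp (x ^ 2 / 2) * (gpdf x + x * stdNormalCDF x) := by ring
  rw [this]
  positivity

/-- key inequality: if `b ^ 2 - a ^ 2 = 2 * c` and `a ≤ b` then `Φ a ≤ exp c * Φ b`. -/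
lemma cdf_key_ineq {a b c : ℝ} (hab : a ≤ b) (h : b ^ 2 - a ^ 2 = 2 * c) :
    stdNormalCDF a ≤ Real.exp c * stdNormalCDF b := by
  have := G_mono.monotone hab
  have h2 : Real.exp (b ^ 2 / 2) = Real.exp c * Real.exp (a ^ 2 / 2) := by
    rw [← Real.exp_add]; congr 1; linarith
  rw [h2] at this
  have he : (0:ℝ) < Real.exp (a ^ 2 / 2) := Real.exp_pos _
  nlinarith [stdNormalCDF_nonneg b, Real.exp_pos c]

lemma gpdf_shift {a b c : ℝ} (h : a ^ 2 = b ^ 2 - 2 * c) : gpdf a = Real.exp c * gpdf b := by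
  unfold gpdf
  have he : Real.exp (-(a ^ 2) / 2) = Real.exp c * Real.exp (-(b ^ 2) / 2) := by
    rw [← Real.exp_add]; congr 1; rw [h]; ring
  rw [he]; ring

lemma core_lemma (S₀ : ℝ) (hS₀ : 0 < S₀) (σ : ℝ → ℝ) (hσpos : ∀ k, 0 < σ k)
    (hσdiff : Differentiable ℝ σ) (P : ℝ → ℝ)
    (hP : ∀ K, 0 < K → P K =
      S₀ * Real.exp (Real.log (K / S₀)) *
        stdNormalCDF (Real.log (K / S₀) / σ (Real.log (K / S₀)) + σ (Real.log (K / S₀)) / 2) -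
      S₀ * stdNormalCDF (Real.log (K / S₀) / σ (Real.log (K / S₀)) - σ (Real.log (K / S₀)) / 2))
    (hconv : ConvexOn ℝ (Set.Ioi (0 : ℝ)) P) :
    ∀ k, deriv σ k * (k / σ k + σ k / 2) < 1 := by
  set F2 : ℝ → ℝ := fun k => k / σ k + σ k / 2 with hF2
  set F1 : ℝ → ℝ := fun k => k / σ k - σ k / 2 with hF1
  set q : ℝ → ℝ := fun k => S₀ * Real.exp k * stdNormalCDF (F2 k) - S₀ * stdNormalCDF (F1 k)
    with hq
  have hexpK : ∀ K : ℝ, 0 < K → S₀ * Real.exp (Real.log (K / S₀)) = K := by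
    intro K hK
    rw [Real.exp_log (div_pos hK hS₀)]
    field_simp
  have hPq : ∀ K : ℝ, 0 < K → P K = q (Real.log (K / S₀)) := fun K hK => hP K hK
  have hsq : ∀ k : ℝ, (F2 k) ^ 2 - (F1 k) ^ 2 = 2 * k := by
    intro k
    have hs := (hσpos k).ne'
    show (k / σ k + σ k / 2) ^ 2 - (k / σ k - σ k / 2) ^ 2 = 2 * k
    have e : k / σ k * σ k = k := by field_simp
    linear_combination 2 * e
  -- P bounds
  have hPle : ∀ K : ℝ, 0 < K → P K ≤ K := by
    intro K hK
    rw [hP K hK]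
    have h1 := stdNormalCDF_le_one (F2 (Real.log (K / S₀)))
    have h2 := stdNormalCDF_nonneg (F1 (Real.log (K / S₀)))
    have h3 := hexpK K hK
    nlinarith [hS₀]
  have hPge : ∀ K : ℝ, 0 < K → 0 ≤ P K := by
    intro K hK
    rw [hP K hK]
    set k := Real.log (K / S₀)
    have hab : F1 k ≤ F2 k := by
      have := hσpos k; simp only [hF1, hF2]; linarith
    have hkey := cdf_key_ineq hab (hsq k)
    have h3 := hexpK K hK
    nlinarith [hS₀, Real.exp_pos k, stdNormalCDF_nonneg (F2 k)]
  -- derivatives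
  have hF2d : ∀ k, HasDerivAt F2 ((1 - deriv σ k * F1 k) / σ k) k := by
    intro k
    have hs := (hσpos k).ne'
    have h1 : HasDerivAt (fun t => t / σ t)
        ((1 * σ k - k * deriv σ k) / (σ k) ^ 2) k :=
      (hasDerivAt_id k).div (hσdiff k).hasDerivAt hs
    have h2 := h1.add ((hσdiff k).hasDerivAt.div_const 2)
    refine h2.congr_deriv ?_
    rw [hF1]
    field_simp [hF1]
    ring
  have hF1d : ∀ k, HasDerivAt F1 ((1 - deriv σ k * F2 k) / σ k) k := by
    intro k
    have hs := (hσpos k).ne'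
    have h1 : HasDerivAt (fun t => t / σ t)
        ((1 * σ k - k * deriv σ k) / (σ k) ^ 2) k :=
      (hasDerivAt_id k).div (hσdiff k).hasDerivAt hs
    have h2 := h1.sub ((hσdiff k).hasDerivAt.div_const 2)
    refine h2.congr_deriv ?_
    rw [hF2]
    field_simp [hF2]
    ring
  have hqd : ∀ k, HasDerivAt q
      (S₀ * Real.exp k * (stdNormalCDF (F2 k) + gpdf (F2 k) * deriv σ k)) k := by
    intro k
    have hs := (hσpos k).ne'
    have hA : HasDerivAt (fun t => S₀ * Real.exp t) (S₀ * Real.exp k) k :=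
      (Real.hasDerivAt_exp k).const_mul S₀
    have hB : HasDerivAt (fun t => stdNormalCDF (F2 t))
        (gpdf (F2 k) * ((1 - deriv σ k * F1 k) / σ k)) k :=
      (hasDerivAt_stdNormalCDF (F2 k)).comp k (hF2d k)
    have hC : HasDerivAt (fun t => S₀ * stdNormalCDF (F1 t))
        (S₀ * (gpdf (F1 k) * ((1 - deriv σ k * F2 k) / σ k))) k :=
      ((hasDerivAt_stdNormalCDF (F1 k)).comp k (hF1d k)).const_mul S₀
    have htot := (hA.mul hB).sub hC
    refine htot.congr_deriv ?_
    have hshift : gpdf (F1 k) = Real.exp k * gpdf (F2 k) := by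
      apply gpdf_shift
      have := hsq k; linarith
    rw [hshift]
    field_simp
    ring
  have hPd : ∀ k, HasDerivAt P
      (stdNormalCDF (F2 k) + gpdf (F2 k) * deriv σ k) (S₀ * Real.exp k) := by
    intro k
    set K₀ := S₀ * Real.exp k with hK₀
    have hK₀pos : 0 < K₀ := by positivity
    have hlogK₀ : Real.log (K₀ / S₀) = k := by
      rw [hK₀, mul_div_cancel_left₀ _ hS₀.ne', Real.log_exp]
    have hL : HasDerivAt (fun K => Real.log (K / S₀)) (1 / K₀) K₀ := by
      have h1 : HasDerivAt (fun K : ℝ => Real.log K - Real.log S₀) (1 / K₀) K₀ := by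
        simpa [one_div] using (Real.hasDerivAt_log hK₀pos.ne').sub_const (Real.log S₀)
      refine h1.congr_of_eventuallyEq ?_
      filter_upwards [eventually_gt_nhds hK₀pos] with K hK
      rw [Real.log_div hK.ne' hS₀.ne']
    have hcomp : HasDerivAt (fun K => q (Real.log (K / S₀)))
        ((S₀ * Real.exp k * (stdNormalCDF (F2 k) + gpdf (F2 k) * deriv σ k)) * (1 / K₀)) K₀ := by
      have h := (hqd (Real.log (K₀ / S₀))).comp K₀ hL
      simp only [hlogK₀] at h
      exact h
    have hPeq : (fun K => q (Real.log (K / S₀))) =ᶠ[𝓝 K₀] P := by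
      filter_upwards [eventually_gt_nhds hK₀pos] with K hK
      exact (hPq K hK).symm
    have hfin := hcomp.congr_of_eventuallyEq hPeq.symm
    refine hfin.congr_deriv ?_
    rw [hK₀]
    field_simp
  -- derivative bounds from convexity
  have hDlow : ∀ k, 0 ≤ stdNormalCDF (F2 k) + gpdf (F2 k) * deriv σ k := by
    intro k
    set K₀ := S₀ * Real.exp k with hK₀
    have hK₀pos : 0 < K₀ := by positivity
    set D := stdNormalCDF (F2 k) + gpdf (F2 k) * deriv σ k with hD
    have hslope : ∀ K' ∈ Set.Ioo (0:ℝ) K₀, -K' / (K₀ - K') ≤ D := by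
      intro K' hK'
      have h1 := hconv.slope_le_of_hasDerivAt (Set.mem_Ioi.2 hK'.1)
        (Set.mem_Ioi.2 hK₀pos) hK'.2 (hPd k)
      rw [slope_def_field] at h1
      refine le_trans ?_ h1
      have hden : 0 < K₀ - K' := by linarith [hK'.2]
      rw [div_le_div_iff_of_pos_right hden]
      have := hPge K₀ hK₀pos
      have := hPle K' hK'.1
      linarith
    have htend : Tendsto (fun K' : ℝ => -K' / (K₀ - K')) (𝓝[>] (0:ℝ)) (𝓝 0) := by
      have hc : ContinuousAt (fun K' : ℝ => -K' / (K₀ - K')) 0 :=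
        ContinuousAt.div (by fun_prop) (by fun_prop) (by simpa using hK₀pos.ne')
      have h2 := hc.tendsto
      simp only [neg_zero, zero_div, sub_zero] at h2
      exact h2.mono_left nhdsWithin_le_nhds
    refine le_of_tendsto htend ?_
    filter_upwards [Ioo_mem_nhdsGT_of_mem (Set.mem_Ico.2 ⟨le_refl 0, hK₀pos⟩)] with K' hK'
    exact hslope K' hK'
  have hDup : ∀ k, stdNormalCDF (F2 k) + gpdf (F2 k) * deriv σ k ≤ 1 := by
    intro k
    set K₀ := S₀ * Real.exp k with hK₀
    have hK₀pos : 0 < K₀ := by positivity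
    set D := stdNormalCDF (F2 k) + gpdf (F2 k) * deriv σ k with hD
    have hslope2 : ∀ᶠ K'' in atTop, D ≤ K'' / (K'' - K₀) := by
      filter_upwards [eventually_gt_atTop K₀] with K'' hK''
      have hK''pos : 0 < K'' := lt_trans hK₀pos hK''
      have h1 := hconv.le_slope_of_hasDerivAt (Set.mem_Ioi.2 hK₀pos)
        (Set.mem_Ioi.2 hK''pos) hK'' (hPd k)
      rw [slope_def_field] at h1
      refine h1.trans ?_
      have hden : 0 < K'' - K₀ := by linarith
      rw [div_le_div_iff_of_pos_right hden]
      have := hPge K₀ hK₀pos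
      have := hPle K'' hK''pos
      linarith
    have htend2 : Tendsto (fun K'' : ℝ => K'' / (K'' - K₀)) atTop (𝓝 1) := by
      have h0 : Tendsto (fun K'' : ℝ => K₀ / (K'' - K₀)) atTop (𝓝 0) :=
        tendsto_const_nhds.div_atTop (tendsto_atTop_add_const_right atTop (-K₀) tendsto_id)
      have h2 : Tendsto (fun K'' : ℝ => 1 + K₀ / (K'' - K₀)) atTop (𝓝 1) := by
        simpa using h0.const_add 1
      refine h2.congr' ?_
      filter_upwards [eventually_gt_atTop K₀] with K'' h
      have hden : K'' - K₀ ≠ 0 := by intro hc; rw [sub_eq_zero] at hc; exact (lt_irrefl _ (hc ▸ h)).elim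
      field_simp
      ring
    exact ge_of_tendsto htend2 hslope2
  -- conclusion via Mills
  intro k
  show deriv σ k * (F2 k) < 1
  have h0 := hDlow k
  have h1 := hDup k
  set x := F2 k with hx2
  have hs1 : (0:ℝ) < gpdf x := gpdf_pos x
  rcases lt_trichotomy x 0 with hx | hx | hx
  · have hm := mills_pos x
    nlinarith [mul_nonneg (neg_nonneg.2 hx.le) h0]
  · rw [hx, mul_zero]; norm_num
  · have hm := mills_pos (-x)
    rw [gpdf_even, stdNormalCDF_neg] at hm
    nlinarith [mul_nonneg hx.le (by linarith : (0:ℝ) ≤ 1 - (stdNormalCDF x + gpdf x * deriv σ k))]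

/-- generalized Fukasawa lemma: if the Black–Scholes Put price
`P(K) = S₀ e^k Φ(−d₂(k)) − S₀ Φ(−d₁(k))`, `k = log(K/S₀)`, is convex on `(0,∞)`,
then `f₁ = −d₁` and `f₂ = −d₂` are strictly increasing, with
`f₁'(k) = (1/σ(k))(1 − σ'(k) f₂(k)) > 0` and `f₂'(k) = (1/σ(k))(1 − σ'(k) f₁(k)) > 0`. -/
theorem fukasawa_f1_f2_strictMono
    (S₀ : ℝ) (hS₀ : 0 < S₀)
    (σ : ℝ → ℝ) (hσpos : ∀ k, 0 < σ k) (hσdiff : Differentiable ℝ σ)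
    (d₁ d₂ f₁ f₂ : ℝ → ℝ)
    (hd₁ : ∀ k, d₁ k = -k / σ k + σ k / 2)
    (hd₂ : ∀ k, d₂ k = -k / σ k - σ k / 2)
    (hf₁ : ∀ k, f₁ k = -d₁ k)
    (hf₂ : ∀ k, f₂ k = -d₂ k)
    (P : ℝ → ℝ)
    (hP : ∀ K, 0 < K → P K =
      S₀ * Real.exp (Real.log (K / S₀)) * stdNormalCDF (-(d₂ (Real.log (K / S₀)))) -
        S₀ * stdNormalCDF (-(d₁ (Real.log (K / S₀)))))
    (hconv : ConvexOn ℝ (Set.Ioi (0 : ℝ)) P) :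
    StrictMono f₁ ∧ StrictMono f₂ ∧
    ∀ k : ℝ,
      deriv f₁ k = (1 / σ k) * (1 - deriv σ k * f₂ k) ∧ 0 < deriv f₁ k ∧
      deriv f₂ k = (1 / σ k) * (1 - deriv σ k * f₁ k) ∧ 0 < deriv f₂ k := by
  have hf₂e : ∀ k, f₂ k = k / σ k + σ k / 2 := by
    intro k; rw [hf₂, hd₂]; ring
  have hf₁e : ∀ k, f₁ k = k / σ k - σ k / 2 := by
    intro k; rw [hf₁, hd₁]; ring
  -- first application of the core lemma : σ' f₂ < 1
  have hP' : ∀ K, 0 < K → P K =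
      S₀ * Real.exp (Real.log (K / S₀)) *
        stdNormalCDF (Real.log (K / S₀) / σ (Real.log (K / S₀)) + σ (Real.log (K / S₀)) / 2) -
      S₀ * stdNormalCDF (Real.log (K / S₀) / σ (Real.log (K / S₀)) - σ (Real.log (K / S₀)) / 2) := by
    intro K hK
    rw [hP K hK]
    congr 2
    · rw [hd₂]; ring_nf
    · rw [hd₁]; ring_nf
  have h1 : ∀ k, deriv σ k * f₂ k < 1 := by
    intro k
    rw [hf₂e k]
    exact core_lemma S₀ hS₀ σ hσpos hσdiff P hP' hconv k
  -- dual application : σ' f₁ < 1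
  have h2 : ∀ k, deriv σ k * f₁ k < 1 := by
    set σ' : ℝ → ℝ := fun l => σ (-l) with hσ'
    set Q : ℝ → ℝ := fun Y => Y - 1 + Y * P (S₀ / Y) / S₀ with hQ
    have hσ'pos : ∀ l, 0 < σ' l := fun l => hσpos (-l)
    have hσ'diff : Differentiable ℝ σ' := hσdiff.comp differentiable_neg
    have hσ'd : ∀ l, HasDerivAt σ' (-(deriv σ (-l))) l := by
      intro l
      have := ((hσdiff (-l)).hasDerivAt.comp l (hasDerivAt_neg l))
      exact this.congr_deriv (by ring)
    have hQP : ∀ Y : ℝ, 0 < Y → Q Y =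
        1 * Real.exp (Real.log (Y / 1)) *
          stdNormalCDF (Real.log (Y / 1) / σ' (Real.log (Y / 1)) + σ' (Real.log (Y / 1)) / 2) -
        1 * stdNormalCDF (Real.log (Y / 1) / σ' (Real.log (Y / 1)) - σ' (Real.log (Y / 1)) / 2) := by
      intro Y hY
      have hY1 : Real.log (Y / 1) = Real.log Y := by rw [div_one]
      set l := Real.log Y with hl
      have hK : (0:ℝ) < S₀ / Y := div_pos hS₀ hY
      have hlog : Real.log ((S₀ / Y) / S₀) = -l := by
        have hdd : S₀ / Y / S₀ = Y⁻¹ := by field_simp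
        rw [hdd, Real.log_inv, hl]
      have hPY := hP' (S₀ / Y) hK
      rw [hlog] at hPY
      have hexp : Real.exp (-l) = 1 / Y := by
        rw [hl, Real.exp_neg, Real.exp_log hY, one_div]
      have harg1 : -l / σ (- l) + σ (- l) / 2 = -(l / σ' l - σ' l / 2) := by
        simp only [hσ']; ring
      have harg2 : -l / σ (- l) - σ (- l) / 2 = -(l / σ' l + σ' l / 2) := by
        simp only [hσ']; ring
      rw [harg1, harg2, stdNormalCDF_neg, stdNormalCDF_neg] at hPY
      rw [hY1]
      have hQYv : Q Y = Y - 1 + Y * P (S₀ / Y) / S₀ := rfl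
      have hel : Real.exp l = Y := Real.exp_log hY
      rw [hQYv, hPY, hexp, hel]
      field_simp
      ring
    have hQconv : ConvexOn ℝ (Set.Ioi (0:ℝ)) Q := by
      refine ⟨convex_Ioi 0, ?_⟩
      intro Y₁ hY₁ Y₂ hY₂ a b ha hb hab
      simp only [smul_eq_mul]
      have hY₁' : (0:ℝ) < Y₁ := hY₁
      have hY₂' : (0:ℝ) < Y₂ := hY₂
      have hYmem : a • Y₁ + b • Y₂ ∈ Set.Ioi (0:ℝ) := (convex_Ioi 0) hY₁ hY₂ ha hb hab
      have hYpos : (0:ℝ) < a * Y₁ + b * Y₂ := hYmem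
      set Y := a * Y₁ + b * Y₂ with hY
      have hkey : Y * P (S₀ / Y) ≤ a * (Y₁ * P (S₀ / Y₁)) + b * (Y₂ * P (S₀ / Y₂)) := by
        have hmem1 : S₀ / Y₁ ∈ Set.Ioi (0:ℝ) := div_pos hS₀ hY₁'
        have hmem2 : S₀ / Y₂ ∈ Set.Ioi (0:ℝ) := div_pos hS₀ hY₂'
        have ha' : 0 ≤ a * Y₁ / Y := by positivity
        have hb' : 0 ≤ b * Y₂ / Y := by positivity
        have hab' : a * Y₁ / Y + b * Y₂ / Y = 1 := by
          rw [← add_div, ← hY, div_self hYpos.ne']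
        have hcomb := hconv.2 hmem1 hmem2 ha' hb' hab'
        simp only [smul_eq_mul] at hcomb
        have hpt : a * Y₁ / Y * (S₀ / Y₁) + b * Y₂ / Y * (S₀ / Y₂) = S₀ / Y := by
          have e1 : a * Y₁ / Y * (S₀ / Y₁) + b * Y₂ / Y * (S₀ / Y₂) = (a + b) * S₀ / Y := by
            field_simp
          rw [e1, hab, one_mul]
        rw [hpt] at hcomb
        have := mul_le_mul_of_nonneg_left hcomb hYpos.le
        calc Y * P (S₀ / Y) ≤ Y * (a * Y₁ / Y * P (S₀ / Y₁) + b * Y₂ / Y * P (S₀ / Y₂)) := this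
          _ = a * (Y₁ * P (S₀ / Y₁)) + b * (Y₂ * P (S₀ / Y₂)) := by
              field_simp
      have hQ1 : Q Y₁ = Y₁ - 1 + Y₁ * P (S₀ / Y₁) / S₀ := rfl
      have hQ2 : Q Y₂ = Y₂ - 1 + Y₂ * P (S₀ / Y₂) / S₀ := rfl
      have hQY : Q Y = Y - 1 + Y * P (S₀ / Y) / S₀ := rfl
      rw [hQY, hQ1, hQ2]
      have hdiv : Y * P (S₀ / Y) / S₀ ≤
          (a * (Y₁ * P (S₀ / Y₁)) + b * (Y₂ * P (S₀ / Y₂))) / S₀ :=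
        (div_le_div_iff_of_pos_right hS₀).2 hkey
      have hexpand : a * (Y₁ - 1 + Y₁ * P (S₀ / Y₁) / S₀) + b * (Y₂ - 1 + Y₂ * P (S₀ / Y₂) / S₀)
          = (a * Y₁ + b * Y₂) - (a + b) +
            (a * (Y₁ * P (S₀ / Y₁)) + b * (Y₂ * P (S₀ / Y₂))) / S₀ := by ring
      rw [hexpand, hab, ← hY]
      linarith [hdiv]
    have hcore := core_lemma 1 one_pos σ' hσ'pos hσ'diff Q hQP hQconv
    intro k
    have := hcore (-k)
    have hd' : deriv σ' (-k) = -(deriv σ k) := by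
      have := (hσ'd (-k)).deriv
      rw [this, neg_neg]
    rw [hd'] at this
    have harg : -k / σ' (-k) + σ' (-k) / 2 = -(f₁ k) := by
      simp only [hσ', neg_neg, hf₁e]; ring
    rw [harg] at this
    calc deriv σ k * f₁ k = -(deriv σ k) * -(f₁ k) := by ring
      _ < 1 := this
  -- derivative computations
  have hf₁d : ∀ k, HasDerivAt f₁ ((1 - deriv σ k * f₂ k) / σ k) k := by
    intro k
    have hs := (hσpos k).ne'
    have hder : HasDerivAt (fun t => t / σ t)
        ((1 * σ k - k * deriv σ k) / (σ k) ^ 2) k :=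
      (hasDerivAt_id k).div (hσdiff k).hasDerivAt hs
    have h2' := hder.sub ((hσdiff k).hasDerivAt.div_const 2)
    have h3 : HasDerivAt f₁ ((1 * σ k - k * deriv σ k) / (σ k) ^ 2 - deriv σ k / 2) k := by
      refine h2'.congr_of_eventuallyEq ?_
      filter_upwards with t
      rw [hf₁e t]
      rfl
    refine h3.congr_deriv ?_
    rw [hf₂e k]
    field_simp
    ring
  have hf₂d : ∀ k, HasDerivAt f₂ ((1 - deriv σ k * f₁ k) / σ k) k := by
    intro k
    have hs := (hσpos k).ne'
    have hder : HasDerivAt (fun t => t / σ t)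
        ((1 * σ k - k * deriv σ k) / (σ k) ^ 2) k :=
      (hasDerivAt_id k).div (hσdiff k).hasDerivAt hs
    have h2' := hder.add ((hσdiff k).hasDerivAt.div_const 2)
    have h3 : HasDerivAt f₂ ((1 * σ k - k * deriv σ k) / (σ k) ^ 2 + deriv σ k / 2) k := by
      refine h2'.congr_of_eventuallyEq ?_
      filter_upwards with t
      rw [hf₂e t]
      rfl
    refine h3.congr_deriv ?_
    rw [hf₁e k]
    field_simp
    ring
  have hder1 : ∀ k, deriv f₁ k = (1 / σ k) * (1 - deriv σ k * f₂ k) := by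
    intro k; rw [(hf₁d k).deriv]; ring
  have hder2 : ∀ k, deriv f₂ k = (1 / σ k) * (1 - deriv σ k * f₁ k) := by
    intro k; rw [(hf₂d k).deriv]; ring
  have hpos1 : ∀ k, 0 < deriv f₁ k := by
    intro k
    rw [hder1 k]
    have ha := h1 k
    have hb := hσpos k
    have : 0 < 1 - deriv σ k * f₂ k := by linarith
    positivity
  have hpos2 : ∀ k, 0 < deriv f₂ k := by
    intro k
    rw [hder2 k]
    have ha := h2 k
    have hb := hσpos k
    have : 0 < 1 - deriv σ k * f₁ k := by linarith
    positivity
  exact ⟨strictMono_of_deriv_pos hpos1, strictMono_of_deriv_pos hpos2,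
    fun k => ⟨hder1 k, hpos1 k, hder2 k, hpos2 k⟩⟩
end

section
/- Let S₀ > 0 and let σ: ℝ → (0,∞) be differentiable. For k ∈ ℝ set d₁(k) = −k/σ(k) + σ(k)/2, d₂(k) = −k/σ(k) − σ(k)/2, f₁(k) = −d₁(k), f₂(k) = −d₂(k). Define P(K) = S₀ e^k Φ(−d₂(k)) − S₀ Φ(−d₁(k)) with k = log(K/S₀), for K > 0, where Φ is the standard normal cumulative distribution function. If K ↦ P(K) is convex on (0,∞), then for every k ∈ ℝ one has f₂(k)·σ'(k) < 1 and f₁(k)·σ'(k) < 1. -/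
open Real MeasureTheory Set Filter Topology

namespace Fuka

noncomputable def g (t : ℝ) : ℝ := Real.exp (-(t ^ 2) / 2) / Real.sqrt (2 * Real.pi)

lemma g_eq (t : ℝ) : g t = Real.exp (-(1/2) * t ^ 2) * (Real.sqrt (2 * Real.pi))⁻¹ := by
  rw [g]; ring_nf

lemma sqrt2pi_pos : 0 < Real.sqrt (2 * Real.pi) := Real.sqrt_pos.2 (by positivity)

lemma g_pos (t : ℝ) : 0 < g t := div_pos (Real.exp_pos _) sqrt2pi_pos

lemma g_cont : Continuous g := by
  unfold g; fun_prop

lemma g_int : Integrable g := by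
  have := (integrable_exp_neg_mul_sq (by norm_num : (0:ℝ) < 1/2)).mul_const
    (Real.sqrt (2 * Real.pi))⁻¹
  exact this.congr (Filter.Eventually.of_forall fun t => by rw [g_eq])

lemma g_total : (∫ t, g t) = 1 := by
  simp_rw [g_eq]
  rw [integral_mul_const, integral_gaussian]
  have : Real.pi / (1/2) = 2 * Real.pi := by ring
  rw [this, mul_inv_cancel₀ (ne_of_gt sqrt2pi_pos)]

lemma g_even (t : ℝ) : g (-t) = g t := by simp [g]

lemma tg_int : Integrable (fun t : ℝ => t * g t) := by
  have := (integrable_mul_exp_neg_mul_sq (by norm_num : (0:ℝ) < 1/2)).mul_const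
    (Real.sqrt (2 * Real.pi))⁻¹
  exact this.congr (Filter.Eventually.of_forall fun t => by simp [g_eq]; ring)

lemma hasDerivAt_g (t : ℝ) : HasDerivAt g (-(t * g t)) t := by
  have h1 : HasDerivAt (fun t : ℝ => -(t ^ 2) / 2) (-t) t := by
    have h := ((hasDerivAt_pow 2 t).neg).div_const 2
    exact h.congr_deriv (by norm_num; ring)
  have h2 := (h1.exp).div_const (Real.sqrt (2 * Real.pi))
  exact h2.congr_deriv (by unfold g; ring)

lemma g_tendsto_top : Tendsto g atTop (𝓝 0) := by
  have h1 : Tendsto (fun t : ℝ => -(t ^ 2) / 2) atTop atBot := by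
    have h2 : Tendsto (fun t : ℝ => t ^ 2) atTop atTop :=
      tendsto_pow_atTop (by norm_num)
    have h3 := h2.const_mul_atTop_of_neg (r := -(1/2 : ℝ)) (by norm_num)
    refine h3.congr (fun t => by ring)
  have h4 := (Real.tendsto_exp_atBot.comp h1).div_const (Real.sqrt (2 * Real.pi))
  rw [zero_div] at h4
  exact h4.congr (fun t => rfl)

lemma cdf_eq (x : ℝ) : stdNormalCDF x = ∫ t in Set.Iic x, g t := rfl

lemma cdf_sub (a b : ℝ) : stdNormalCDF b - stdNormalCDF a = ∫ t in a..b, g t :=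
  intervalIntegral.integral_Iic_sub_Iic g_int.integrableOn g_int.integrableOn

lemma hasDerivAt_cdf (x : ℝ) : HasDerivAt stdNormalCDF (g x) x := by
  have h : ∀ y, stdNormalCDF y = stdNormalCDF 0 + ∫ t in (0:ℝ)..y, g t := by
    intro y; rw [← cdf_sub]; ring
  have h2 : HasDerivAt (fun y => stdNormalCDF 0 + ∫ t in (0:ℝ)..y, g t) (g x) x :=
    ((intervalIntegral.integral_hasDerivAt_right (g_int.intervalIntegrable)
      (g_cont.stronglyMeasurableAtFilter _ _) g_cont.continuousAt).const_add _)
  exact h2.congr_of_eventuallyEq (Eventually.of_forall h)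

lemma cdf_nonneg (x : ℝ) : 0 ≤ stdNormalCDF x :=
  setIntegral_nonneg measurableSet_Iic (fun t _ => (g_pos t).le)

lemma cdf_pos (x : ℝ) : 0 < stdNormalCDF x := by
  rw [cdf_eq]
  rw [setIntegral_pos_iff_support_of_nonneg_ae
    (Eventually.of_forall (fun t => (g_pos t).le)) g_int.integrableOn]
  have : Function.support g = Set.univ := by
    ext t; simp [Function.support, ne_of_gt (g_pos t)]
  rw [this]
  simp [Real.volume_Iic]

noncomputable def Q (x : ℝ) : ℝ := ∫ t in Set.Ioi x, g t

lemma cdf_add_Q (x : ℝ) : stdNormalCDF x + Q x = 1 := by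
  rw [cdf_eq, Q, intervalIntegral.integral_Iic_add_Ioi g_int.integrableOn g_int.integrableOn,
    g_total]

lemma Q_pos (x : ℝ) : 0 < Q x := by
  rw [Q, setIntegral_pos_iff_support_of_nonneg_ae
    (Eventually.of_forall (fun t => (g_pos t).le)) g_int.integrableOn]
  have : Function.support g = Set.univ := by
    ext t; simp [Function.support, ne_of_gt (g_pos t)]
  rw [this]
  simp [Real.volume_Ioi]

lemma Q_nonneg (x : ℝ) : 0 ≤ Q x := (Q_pos x).le

lemma cdf_le_one (x : ℝ) : stdNormalCDF x ≤ 1 := by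
  have := cdf_add_Q x; have := Q_pos x; linarith

lemma hasDerivAt_Q (x : ℝ) : HasDerivAt Q (-(g x)) x := by
  have h : ∀ y, Q y = 1 - stdNormalCDF y := by
    intro y; have := cdf_add_Q y; linarith
  have h2 : HasDerivAt (fun y => 1 - stdNormalCDF y) (-(g x)) x :=
    (hasDerivAt_cdf x).const_sub 1
  exact h2.congr_of_eventuallyEq (Eventually.of_forall h)

lemma integral_tg_Ioi (x : ℝ) : (∫ t in Set.Ioi x, t * g t) = g x := by
  have ht : Tendsto (fun t => -(g t)) atTop (𝓝 0) := by
    simpa using g_tendsto_top.neg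
  have h := integral_Ioi_of_hasDerivAt_of_tendsto'
    (f := fun t => -(g t)) (f' := fun t => t * g t) (a := x)
    (fun t _ => by have h := (hasDerivAt_g t).neg; rwa [neg_neg] at h)
    (tg_int.integrableOn)
    ht
  simp at h
  linarith

lemma mills_aux : ∀ x : ℝ, 0 < x → x * Q x ≤ g x := by
  intro x hx
  have h1 : x * Q x = ∫ t in Set.Ioi x, x * g t := by
    rw [Q, integral_const_mul]
  rw [h1, ← integral_tg_Ioi x]
  apply setIntegral_mono_on (g_int.integrableOn.const_mul x) tg_int.integrableOn
    measurableSet_Ioi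
  intro t ht
  exact mul_le_mul_of_nonneg_right (le_of_lt ht) (g_pos t).le

noncomputable def G (x : ℝ) : ℝ := g x - x * Q x

lemma hasDerivAt_G (x : ℝ) : HasDerivAt G (-(Q x)) x := by
  have h2 : HasDerivAt (fun y => y * Q y) (1 * Q x + x * -(g x)) x :=
    (hasDerivAt_id x).mul (hasDerivAt_Q x)
  have := (hasDerivAt_g x).sub h2
  exact this.congr_deriv (by ring)

lemma G_strictAnti : StrictAnti G := by
  apply strictAnti_of_deriv_neg
  intro x
  rw [(hasDerivAt_G x).deriv]
  simpa using Q_pos x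

lemma G_tendsto : Tendsto G atTop (𝓝 0) := by
  have h1 : Tendsto (fun x : ℝ => x * Q x) atTop (𝓝 0) := by
    apply squeeze_zero' (g := g)
    · filter_upwards [eventually_gt_atTop 0] with x hx
      exact mul_nonneg hx.le (Q_nonneg x)
    · filter_upwards [eventually_gt_atTop 0] with x hx
      exact mills_aux x hx
    · exact g_tendsto_top
  have := g_tendsto_top.sub h1; rw [sub_zero] at this; exact this

lemma G_pos (x : ℝ) : 0 < G x := by
  have h1 : (0:ℝ) ≤ G (x + 1) := by
    apply le_of_tendsto G_tendsto
    filter_upwards [eventually_ge_atTop (x + 1)] with y hy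
    exact (G_strictAnti.antitone hy)
  have := G_strictAnti (by linarith : x < x + 1)
  linarith

lemma mills (x : ℝ) : x * Q x < g x := by have := G_pos x; unfold G at this; linarith

lemma cdf_neg (x : ℝ) : stdNormalCDF (-x) = Q x := by
  rw [cdf_eq, Q]
  have h1 : (∫ t in Set.Iic (-x), g t) = ∫ t in Set.Iic (-x), g (-t) :=
    setIntegral_congr_fun measurableSet_Iic (fun t _ => (g_even t).symm)
  rw [h1, integral_comp_neg_Iic, neg_neg]

lemma cdf_neg' (x : ℝ) : stdNormalCDF (-x) = 1 - stdNormalCDF x := by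
  rw [cdf_neg]; have := cdf_add_Q x; linarith

/-- Mills inequality on the left tail: `(-x) * Φ x < g x`. -/
lemma mills_cdf (x : ℝ) : (-x) * stdNormalCDF x < g x := by
  have h := mills (-x)
  rw [← cdf_neg (-x), neg_neg] at h
  rwa [g_even] at h

/-- The Mills-type ratio `R x = Φ x * √(2π) * exp (x²/2)` is strictly monotone. -/
noncomputable def R (x : ℝ) : ℝ :=
  stdNormalCDF x * (Real.sqrt (2 * Real.pi) * Real.exp (x ^ 2 / 2))

lemma u_pos (x : ℝ) : 0 < Real.sqrt (2 * Real.pi) * Real.exp (x ^ 2 / 2) :=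
  mul_pos sqrt2pi_pos (Real.exp_pos _)

lemma g_mul_u (x : ℝ) : g x * (Real.sqrt (2 * Real.pi) * Real.exp (x ^ 2 / 2)) = 1 := by
  have h : Real.exp (-(x ^ 2) / 2) * Real.exp (x ^ 2 / 2) = 1 := by
    rw [← Real.exp_add, show -(x ^ 2) / 2 + x ^ 2 / 2 = (0:ℝ) by ring, Real.exp_zero]
  rw [g]
  calc Real.exp (-(x ^ 2) / 2) / Real.sqrt (2 * Real.pi) *
      (Real.sqrt (2 * Real.pi) * Real.exp (x ^ 2 / 2))
      = (Real.exp (-(x ^ 2) / 2) * Real.exp (x ^ 2 / 2)) *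
        (Real.sqrt (2 * Real.pi) / Real.sqrt (2 * Real.pi)) := by ring
    _ = 1 := by rw [h, div_self (ne_of_gt sqrt2pi_pos), one_mul]

lemma hasDerivAt_u (x : ℝ) :
    HasDerivAt (fun y => Real.sqrt (2 * Real.pi) * Real.exp (y ^ 2 / 2))
      (x * (Real.sqrt (2 * Real.pi) * Real.exp (x ^ 2 / 2))) x := by
  have h1 : HasDerivAt (fun y : ℝ => y ^ 2 / 2) x x := by
    have h := (hasDerivAt_pow 2 x).div_const 2
    exact h.congr_deriv (by norm_num)
  have h2 := (h1.exp).const_mul (Real.sqrt (2 * Real.pi))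
  exact h2.congr_deriv (by ring)

lemma hasDerivAt_R (x : ℝ) : HasDerivAt R (1 + x * R x) x := by
  have h := (hasDerivAt_cdf x).mul (hasDerivAt_u x)
  have e : g x * (Real.sqrt (2 * Real.pi) * Real.exp (x ^ 2 / 2)) +
      stdNormalCDF x * (x * (Real.sqrt (2 * Real.pi) * Real.exp (x ^ 2 / 2))) =
      1 + x * R x := by
    rw [g_mul_u, R]; ring
  rw [e] at h
  exact h

lemma deriv_R_pos (x : ℝ) : 0 < 1 + x * R x := by
  rcases le_or_gt 0 x with hx | hx
  · have : 0 ≤ x * R x :=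
      mul_nonneg hx (mul_nonneg (cdf_nonneg x) (u_pos x).le)
    linarith
  · have h := mills_cdf x
    have hu := u_pos x
    have h2 : (-x) * stdNormalCDF x * (Real.sqrt (2 * Real.pi) * Real.exp (x ^ 2 / 2)) <
        g x * (Real.sqrt (2 * Real.pi) * Real.exp (x ^ 2 / 2)) :=
      mul_lt_mul_of_pos_right h hu
    rw [g_mul_u] at h2
    have : (-x) * R x < 1 := by rw [R]; nlinarith [h2]
    nlinarith [this]

lemma R_strictMono : StrictMono R := by
  apply strictMono_of_deriv_pos
  intro x
  rw [(hasDerivAt_R x).deriv]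
  exact deriv_R_pos x

/-- `Φ a < e^((b²-a²)/2) Φ b` for `a < b`. -/
lemma cdf_ratio_lt {a b : ℝ} (hab : a < b) :
    stdNormalCDF a < Real.exp ((b ^ 2 - a ^ 2) / 2) * stdNormalCDF b := by
  have h := R_strictMono hab
  rw [R, R] at h
  have hua := u_pos a
  have e : Real.exp (b ^ 2 / 2) = Real.exp ((b ^ 2 - a ^ 2) / 2) * Real.exp (a ^ 2 / 2) := by
    rw [← Real.exp_add]; ring_nf
  rw [e] at h
  have h2 : stdNormalCDF a * (Real.sqrt (2 * Real.pi) * Real.exp (a ^ 2 / 2)) <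
      (Real.exp ((b ^ 2 - a ^ 2) / 2) * stdNormalCDF b) *
        (Real.sqrt (2 * Real.pi) * Real.exp (a ^ 2 / 2)) := by
    calc stdNormalCDF a * (Real.sqrt (2 * Real.pi) * Real.exp (a ^ 2 / 2)) <
        stdNormalCDF b * (Real.sqrt (2 * Real.pi) *
          (Real.exp ((b ^ 2 - a ^ 2) / 2) * Real.exp (a ^ 2 / 2))) := h
      _ = (Real.exp ((b ^ 2 - a ^ 2) / 2) * stdNormalCDF b) *
        (Real.sqrt (2 * Real.pi) * Real.exp (a ^ 2 / 2)) := by ring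
  exact lt_of_mul_lt_mul_right h2 (u_pos a).le

lemma g_shift (k a : ℝ) (ha : 0 < a) :
    g (k / a - a / 2) = Real.exp k * g (k / a + a / 2) := by
  rw [g, g, mul_div_assoc', ← Real.exp_add]
  congr 1
  field_simp
  ring

/-- The core slope bound: convexity of the Black-Scholes put implies `f₂ σ' < 1`. -/
lemma core (S₀ : ℝ) (hS₀ : 0 < S₀) (σ : ℝ → ℝ) (hσpos : ∀ k, 0 < σ k)
    (hσdiff : Differentiable ℝ σ) (P : ℝ → ℝ)
    (hP : ∀ K, 0 < K → P K =
      K * stdNormalCDF (Real.log (K / S₀) / σ (Real.log (K / S₀)) + σ (Real.log (K / S₀)) / 2) -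
      S₀ * stdNormalCDF (Real.log (K / S₀) / σ (Real.log (K / S₀)) - σ (Real.log (K / S₀)) / 2))
    (hconv : ConvexOn ℝ (Set.Ioi (0:ℝ)) P) :
    ∀ k : ℝ, (k / σ k + σ k / 2) * deriv σ k < 1 := by
  have hPpos : ∀ K, 0 < K → 0 < P K := by
    intro K hK
    rw [hP K hK]
    set m := Real.log (K / S₀) with hm
    have hσm := hσpos m
    have hab : m / σ m - σ m / 2 < m / σ m + σ m / 2 := by linarith
    have h := cdf_ratio_lt hab
    have he : ((m / σ m + σ m / 2) ^ 2 - (m / σ m - σ m / 2) ^ 2) / 2 = m := by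
      field_simp
      ring
    rw [he] at h
    have hK' : Real.exp m = K / S₀ := Real.exp_log (div_pos hK hS₀)
    rw [hK'] at h
    have h2 : S₀ * stdNormalCDF (m / σ m - σ m / 2) <
        S₀ * (K / S₀ * stdNormalCDF (m / σ m + σ m / 2)) :=
      mul_lt_mul_of_pos_left h hS₀
    rw [show S₀ * (K / S₀ * stdNormalCDF (m / σ m + σ m / 2)) =
      K * stdNormalCDF (m / σ m + σ m / 2) by field_simp] at h2
    linarith
  have hPle : ∀ K, 0 < K → P K ≤ K := by
    intro K hK
    rw [hP K hK]
    set m := Real.log (K / S₀)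
    have h1 := cdf_le_one (m / σ m + σ m / 2)
    have h2 := cdf_nonneg (m / σ m - σ m / 2)
    nlinarith
  intro k
  -- the strike corresponding to log-moneyness k
  set K : ℝ := S₀ * Real.exp k with hKdef
  have hKpos : 0 < K := mul_pos hS₀ (Real.exp_pos k)
  have hKS : K / S₀ = Real.exp k := by
    rw [hKdef, mul_comm, mul_div_assoc, div_self (ne_of_gt hS₀), mul_one]
  have hlogK : Real.log (K / S₀) = k := by rw [hKS, Real.log_exp]
  have ha := hσpos k
  set s : ℝ := deriv σ k with hs
  have hσd : HasDerivAt σ s k := (hσdiff k).hasDerivAt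
  set D₂ : ℝ := (1 * σ k - k * s) / (σ k) ^ 2 + s / 2 with hD₂
  set D₁ : ℝ := (1 * σ k - k * s) / (σ k) ^ 2 - s / 2 with hD₁
  have hF₂d : HasDerivAt (fun x => x / σ x + σ x / 2) D₂ k :=
    ((hasDerivAt_id k).div hσd (ne_of_gt ha)).add (hσd.div_const 2)
  have hF₁d : HasDerivAt (fun x => x / σ x - σ x / 2) D₁ k :=
    ((hasDerivAt_id k).div hσd (ne_of_gt ha)).sub (hσd.div_const 2)
  have hL : HasDerivAt (fun K' : ℝ => Real.log (K' / S₀)) K⁻¹ K := by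
    have h0 : HasDerivAt (fun K' : ℝ => Real.log K' - Real.log S₀) K⁻¹ K :=
      (Real.hasDerivAt_log (ne_of_gt hKpos)).sub_const _
    apply h0.congr_of_eventuallyEq
    filter_upwards [Ioi_mem_nhds hKpos] with x hx
    rw [Real.log_div (ne_of_gt hx) (ne_of_gt hS₀)]
  have hΦ₂ : HasDerivAt
      (fun K' : ℝ => stdNormalCDF (Real.log (K' / S₀) / σ (Real.log (K' / S₀)) +
        σ (Real.log (K' / S₀)) / 2))
      (g (k / σ k + σ k / 2) * (D₂ * K⁻¹)) K := by
    have h2 : HasDerivAt (fun x => x / σ x + σ x / 2) D₂ (Real.log (K / S₀)) := by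
      rwa [hlogK]
    have h3 := h2.comp K hL
    have h4 := (hasDerivAt_cdf ((fun x => x / σ x + σ x / 2) (Real.log (K / S₀)))).comp K h3
    simp only [Function.comp] at h4
    rw [hlogK] at h4
    exact h4
  have hΦ₁ : HasDerivAt
      (fun K' : ℝ => stdNormalCDF (Real.log (K' / S₀) / σ (Real.log (K' / S₀)) -
        σ (Real.log (K' / S₀)) / 2))
      (g (k / σ k - σ k / 2) * (D₁ * K⁻¹)) K := by
    have h2 : HasDerivAt (fun x => x / σ x - σ x / 2) D₁ (Real.log (K / S₀)) := by
      rwa [hlogK]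
    have h3 := h2.comp K hL
    have h4 := (hasDerivAt_cdf ((fun x => x / σ x - σ x / 2) (Real.log (K / S₀)))).comp K h3
    simp only [Function.comp] at h4
    rw [hlogK] at h4
    exact h4
  set p : ℝ := stdNormalCDF (k / σ k + σ k / 2) + g (k / σ k + σ k / 2) * s with hp
  have hderivP : HasDerivAt P p K := by
    have hterm1 := (hasDerivAt_id K).mul hΦ₂
    have hterm2 := hΦ₁.const_mul S₀
    have hPf := hterm1.sub hterm2
    rw [hlogK] at hPf
    have hval : 1 * stdNormalCDF (k / σ k + σ k / 2) +
        id K * (g (k / σ k + σ k / 2) * (D₂ * K⁻¹)) -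
        S₀ * (g (k / σ k - σ k / 2) * (D₁ * K⁻¹)) = p := by
      rw [hp, g_shift k (σ k) ha, hKdef, hD₂, hD₁]
      simp only [id]
      have he := Real.exp_ne_zero k
      have hane := ne_of_gt ha
      have hSne := ne_of_gt hS₀
      field_simp
      ring
    rw [hval] at hPf
    apply hPf.congr_of_eventuallyEq
    filter_upwards [Ioi_mem_nhds hKpos] with x hx
    rw [hP x hx]
    rfl
  have hKmem : K ∈ Set.Ioi (0:ℝ) := hKpos
  -- upper bound p ≤ 1
  have hple : p ≤ 1 := by
    by_contra hc
    push_neg at hc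
    set T : ℝ := max 1 ((K - P K) / (p - 1) + 1) with hT
    have hT1 : 1 ≤ T := le_max_left _ _
    have hT2 : (K - P K) / (p - 1) + 1 ≤ T := le_max_right _ _
    set K2 : ℝ := K + T with hK2
    have hKK2 : K < K2 := by rw [hK2]; linarith
    have hK2pos : (0:ℝ) < K2 := by linarith
    have hslope := hconv.le_slope_of_hasDerivAt hKmem (Set.mem_Ioi.2 hK2pos) hKK2 hderivP
    rw [slope_def_field] at hslope
    have hPK2 := hPle K2 hK2pos
    have hd : K2 - K = T := by rw [hK2]; ring
    rw [hd] at hslope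
    have hT0 : 0 < T := by linarith
    have h5 : p * T ≤ P K2 - P K := by
      rw [le_div_iff₀ hT0] at hslope
      exact hslope
    have h6 : (p - 1) * T ≤ K - P K := by nlinarith [hPK2]
    have h7 : K - P K < (p - 1) * T := by
      have : (K - P K) / (p - 1) < T := by linarith
      have hp1 : 0 < p - 1 := by linarith
      calc K - P K = (K - P K) / (p - 1) * (p - 1) := by field_simp
        _ < T * (p - 1) := by exact mul_lt_mul_of_pos_right this hp1
        _ = (p - 1) * T := by ring
    linarith
  -- lower bound 0 ≤ p
  have hpge : 0 ≤ p := by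
    by_contra hc
    push_neg at hc
    have hPK := hPpos K hKpos
    set K' : ℝ := min (K / 2) (P K / 2) with hK'
    have hK'pos : 0 < K' := lt_min (by linarith) (by linarith)
    have hK'K : K' < K := lt_of_le_of_lt (min_le_left _ _) (by linarith)
    have hslope := hconv.slope_le_of_hasDerivAt (Set.mem_Ioi.2 hK'pos) hKmem hK'K hderivP
    rw [slope_def_field] at hslope
    have hd : 0 < K - K' := by linarith
    have h5 : P K - P K' ≤ p * (K - K') := by
      rw [div_le_iff₀ hd] at hslope
      linarith
    have h6 : p * (K - K') < 0 := mul_neg_of_neg_of_pos hc hd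
    have h7 : P K' ≤ K' := hPle K' hK'pos
    have h8 : K' ≤ P K / 2 := min_le_right _ _
    linarith
  -- conclude by cases on the sign of x := k/σ k + σ k / 2
  set x : ℝ := k / σ k + σ k / 2 with hx
  have hgx := g_pos x
  rcases lt_trichotomy x 0 with hx0 | hx0 | hx0
  · -- x < 0 : use 0 ≤ p and Mills for Φ
    have hmc := mills_cdf x
    have h1 : -(stdNormalCDF x) ≤ g x * s := by
      rw [hp] at hpge; linarith
    nlinarith [hmc, hgx, mul_le_mul_of_nonneg_left h1 (by linarith : (0:ℝ) ≤ -x)]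
  · rw [hx0]; norm_num
  · -- 0 < x : use p ≤ 1 and Mills for Q
    have hmq := mills x
    have hQ : Q x = 1 - stdNormalCDF x := by have := cdf_add_Q x; linarith
    have h1 : g x * s ≤ 1 - stdNormalCDF x := by rw [hp] at hple; linarith
    rw [← hQ] at h1
    nlinarith [hmq, hgx, mul_le_mul_of_nonneg_left h1 (le_of_lt hx0)]

end Fuka

/-- if the Black–Scholes Put price
`P(K) = S₀ e^k Φ(−d₂(k)) − S₀ Φ(−d₁(k))`, `k = log(K/S₀)`, is convex on `(0,∞)`,
then for every `k` one has `f₂(k)·σ'(k) < 1` and `f₁(k)·σ'(k) < 1`,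
where `f₁ = −d₁` and `f₂ = −d₂`. -/
theorem fukasawa_slope_bounds
    (S₀ : ℝ) (hS₀ : 0 < S₀)
    (σ : ℝ → ℝ) (hσpos : ∀ k, 0 < σ k) (hσdiff : Differentiable ℝ σ)
    (d₁ d₂ f₁ f₂ : ℝ → ℝ)
    (hd₁ : ∀ k, d₁ k = -k / σ k + σ k / 2)
    (hd₂ : ∀ k, d₂ k = -k / σ k - σ k / 2)
    (hf₁ : ∀ k, f₁ k = -d₁ k)
    (hf₂ : ∀ k, f₂ k = -d₂ k)
    (P : ℝ → ℝ)
    (hP : ∀ K, 0 < K → P K =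
      S₀ * Real.exp (Real.log (K / S₀)) * stdNormalCDF (-(d₂ (Real.log (K / S₀)))) -
        S₀ * stdNormalCDF (-(d₁ (Real.log (K / S₀)))))
    (hconv : ConvexOn ℝ (Set.Ioi (0 : ℝ)) P) :
    ∀ k : ℝ, f₂ k * deriv σ k < 1 ∧ f₁ k * deriv σ k < 1 := by
  have hP' : ∀ K, 0 < K → P K =
      K * stdNormalCDF (Real.log (K / S₀) / σ (Real.log (K / S₀)) + σ (Real.log (K / S₀)) / 2) -
      S₀ * stdNormalCDF (Real.log (K / S₀) / σ (Real.log (K / S₀)) -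
        σ (Real.log (K / S₀)) / 2) := by
    intro K hK
    rw [hP K hK, Real.exp_log (div_pos hK hS₀), hd₁, hd₂]
    have e2 : -(-(Real.log (K / S₀)) / σ (Real.log (K / S₀)) - σ (Real.log (K / S₀)) / 2) =
        Real.log (K / S₀) / σ (Real.log (K / S₀)) + σ (Real.log (K / S₀)) / 2 := by ring
    have e1 : -(-(Real.log (K / S₀)) / σ (Real.log (K / S₀)) + σ (Real.log (K / S₀)) / 2) =
        Real.log (K / S₀) / σ (Real.log (K / S₀)) - σ (Real.log (K / S₀)) / 2 := by ring
    rw [e1, e2, show S₀ * (K / S₀) = K by field_simp]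
  -- the direct bound for f₂
  have hcore := Fuka.core S₀ hS₀ σ hσpos hσdiff P hP' hconv
  -- dual setup for f₁
  set C : ℝ → ℝ := fun K => P K + (S₀ - K) with hCdef
  have hCconv : ConvexOn ℝ (Set.Ioi (0:ℝ)) C := by
    apply hconv.add
    refine ⟨convex_Ioi 0, fun x _ y _ a b ha hb hab => le_of_eq ?_⟩
    simp only [smul_eq_mul]
    linear_combination (-S₀) * hab
  set Pd : ℝ → ℝ := fun K => K / S₀ * C (S₀ ^ 2 / K) with hPdDef
  have hPdconv : ConvexOn ℝ (Set.Ioi (0:ℝ)) Pd := by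
    refine ⟨convex_Ioi 0, fun x hx y hy a b ha hb hab => ?_⟩
    simp only [smul_eq_mul]
    have hx0 : (0:ℝ) < x := hx
    have hy0 : (0:ℝ) < y := hy
    have hz : 0 < a * x + b * y := by
      rcases le_total x y with hxy | hxy
      · nlinarith
      · nlinarith
    set z := a * x + b * y with hzdef
    have hu : S₀ ^ 2 / x ∈ Set.Ioi (0:ℝ) := by simp [Set.mem_Ioi]; positivity
    have hv : S₀ ^ 2 / y ∈ Set.Ioi (0:ℝ) := by simp [Set.mem_Ioi]; positivity
    have hα : 0 ≤ a * x / z := by positivity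
    have hβ : 0 ≤ b * y / z := by positivity
    have hαβ : a * x / z + b * y / z = 1 := by
      field_simp
      exact hzdef.symm
    have hcomb : (a * x / z) • (S₀ ^ 2 / x) + (b * y / z) • (S₀ ^ 2 / y) = S₀ ^ 2 / z := by
      have e1 : a * x / z * (S₀ ^ 2 / x) = a * (S₀ ^ 2 / z) := by
        field_simp
      have e2 : b * y / z * (S₀ ^ 2 / y) = b * (S₀ ^ 2 / z) := by
        field_simp
      rw [smul_eq_mul, smul_eq_mul, e1, e2, ← add_mul, hab, one_mul]
    have h := hCconv.2 hu hv hα hβ hαβ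
    rw [hcomb] at h
    have h2 := mul_le_mul_of_nonneg_left h (by positivity : (0:ℝ) ≤ z / S₀)
    calc Pd (a * x + b * y) = z / S₀ * C (S₀ ^ 2 / z) := rfl
      _ ≤ z / S₀ * ((a * x / z) • C (S₀ ^ 2 / x) + (b * y / z) • C (S₀ ^ 2 / y)) := h2
      _ = a * (x / S₀ * C (S₀ ^ 2 / x)) + b * (y / S₀ * C (S₀ ^ 2 / y)) := by
          simp only [smul_eq_mul]
          field_simp
      _ = a * Pd x + b * Pd y := rfl
  have hPd : ∀ K, 0 < K → Pd K =
      K * stdNormalCDF (Real.log (K / S₀) / σ (-(Real.log (K / S₀))) +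
        σ (-(Real.log (K / S₀))) / 2) -
      S₀ * stdNormalCDF (Real.log (K / S₀) / σ (-(Real.log (K / S₀))) -
        σ (-(Real.log (K / S₀))) / 2) := by
    intro K hK
    have hK2 : 0 < S₀ ^ 2 / K := by positivity
    have hm : Real.log ((S₀ ^ 2 / K) / S₀) = -Real.log (K / S₀) := by
      rw [show S₀ ^ 2 / K / S₀ = (K / S₀)⁻¹ by field_simp, Real.log_inv]
    have hPX := hP' (S₀ ^ 2 / K) hK2
    rw [hm] at hPX
    set m := Real.log (K / S₀) with hmdef
    have e1 : -m / σ (-m) + σ (-m) / 2 = -(m / σ (-m) - σ (-m) / 2) := by ring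
    have e2 : -m / σ (-m) - σ (-m) / 2 = -(m / σ (-m) + σ (-m) / 2) := by ring
    rw [e1, e2, Fuka.cdf_neg', Fuka.cdf_neg'] at hPX
    have hPdK : Pd K = K / S₀ * (P (S₀ ^ 2 / K) + (S₀ - S₀ ^ 2 / K)) := rfl
    rw [hPdK, hPX]
    have hKne := ne_of_gt hK
    have hSne := ne_of_gt hS₀
    field_simp
    ring
  have hσd' : Differentiable ℝ (fun x : ℝ => σ (-x)) :=
    Differentiable.comp hσdiff differentiable_neg
  have hdual := Fuka.core S₀ hS₀ (fun x => σ (-x)) (fun x => hσpos (-x)) hσd' Pd hPd hPdconv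
  intro k
  constructor
  · have h2 := hcore k
    have hf : f₂ k = k / σ k + σ k / 2 := by rw [hf₂, hd₂]; ring
    rw [hf]; exact h2
  · have h2 := hdual (-k)
    simp only [neg_neg] at h2
    have hnd : deriv (fun x : ℝ => σ (-x)) (-k) = -deriv σ k := by
      have hcompd : HasDerivAt (fun x : ℝ => σ (-x)) (deriv σ k * (-1)) (-k) := by
        have hh := ((hσdiff (-(-k))).hasDerivAt).comp (-k) (hasDerivAt_neg (-k))
        simp only [neg_neg] at hh
        exact hh
      rw [hcompd.deriv]; ring
    rw [hnd] at h2
    have hf : f₁ k = k / σ k - σ k / 2 := by rw [hf₁, hd₁]; ring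
    rw [hf]
    calc (k / σ k - σ k / 2) * deriv σ k
        = (-k / σ k + σ k / 2) * (-(deriv σ k)) := by ring
      _ < 1 := h2
end

section
/- Let b > 0, ρ ∈ (−1,1), α ∈ ℝ with α + b√(1−ρ²) > 0, and define N(l) = α + b(ρl + √(l²+1)). Fix σ > 0, μ ∈ ℝ and set w(k) = σ·N(k/σ − μ), which is positive. Define the Durrleman function g(k) = (1 − k w'(k)/(2w(k)))² − (w'(k)²/4)(1/w(k) + 1/4) + w''(k)/2. Then for every l ∈ ℝ, g(σ(l+μ)) = G₁(l) + G₂(l)/(2σ), where G₁(l) = (1 − N'(l)((l+μ)/(2N(l)) + 1/4))·(1 − N'(l)((l+μ)/(2N(l)) − 1/4)) and G₂(l) = N''(l) − N'(l)²/(2N(l)). -/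
/-- decomposition of the Durrleman function of the SVI smile,
`g(σ(l+μ)) = G₁(l) + G₂(l)/(2σ)`, where `w(k) = σN(k/σ − μ)` is the SVI total
variance in normalized parameters. -/
theorem durrleman_decomposition
    (b ρ α σ μ : ℝ) (hb : 0 < b) (hρ₁ : -1 < ρ) (hρ₂ : ρ < 1)
    (hα : 0 < α + b * Real.sqrt (1 - ρ ^ 2)) (hσ : 0 < σ)
    (N w g G₁ G₂ : ℝ → ℝ)
    (hN : ∀ l, N l = α + b * (ρ * l + Real.sqrt (l ^ 2 + 1)))
    (hw : ∀ k, w k = σ * N (k / σ - μ))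
    (hg : ∀ k, g k = (1 - k * deriv w k / (2 * w k)) ^ 2 -
        (deriv w k) ^ 2 / 4 * (1 / w k + 1 / 4) + deriv (deriv w) k / 2)
    (hG₁ : ∀ l, G₁ l =
        (1 - deriv N l * ((l + μ) / (2 * N l) + 1 / 4)) *
        (1 - deriv N l * ((l + μ) / (2 * N l) - 1 / 4)))
    (hG₂ : ∀ l, G₂ l = deriv (deriv N) l - (deriv N l) ^ 2 / (2 * N l)) :
    (∀ k, 0 < w k) ∧
    ∀ l : ℝ, g (σ * (l + μ)) = G₁ l + G₂ l / (2 * σ) := by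
  have hNfun : N = fun l => α + b * (ρ * l + Real.sqrt (l ^ 2 + 1)) := funext hN
  have hwfun : w = fun k => σ * N (k / σ - μ) := funext hw
  subst hwfun
  subst hNfun
  -- basic facts about sqrt
  have ht : ∀ l : ℝ, 0 < Real.sqrt (l ^ 2 + 1) := fun l =>
    Real.sqrt_pos.2 (by positivity)
  have hts : ∀ l : ℝ, Real.sqrt (l ^ 2 + 1) ^ 2 = l ^ 2 + 1 := fun l =>
    Real.sq_sqrt (by positivity)
  -- positivity of N
  have hNpos : ∀ l : ℝ, 0 < α + b * (ρ * l + Real.sqrt (l ^ 2 + 1)) := by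
    intro l
    set s := Real.sqrt (1 - ρ ^ 2) with hs
    have hs0 : 0 ≤ s := Real.sqrt_nonneg _
    have hs2 : s ^ 2 = 1 - ρ ^ 2 := Real.sq_sqrt (by nlinarith)
    have key : s ≤ ρ * l + Real.sqrt (l ^ 2 + 1) := by
      nlinarith [sq_nonneg (l * s + ρ), ht l, hts l, sq_nonneg (ρ * l + Real.sqrt (l ^ 2 + 1) - s)]
    nlinarith
  -- derivative of sqrt(l^2+1)
  have hsq : ∀ l : ℝ, HasDerivAt (fun l : ℝ => Real.sqrt (l ^ 2 + 1))
      (l / Real.sqrt (l ^ 2 + 1)) l := by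
    intro l
    have h1 : HasDerivAt (fun l : ℝ => l ^ 2 + 1) (2 * l) l := by
      simpa using (hasDerivAt_pow 2 l).add_const 1
    have h2 := (Real.hasDerivAt_sqrt (by positivity : (l ^ 2 + 1 : ℝ) ≠ 0)).comp l h1
    refine h2.congr_deriv ?_
    ring
  -- derivative of N
  have hNd : ∀ l : ℝ, HasDerivAt (fun l => α + b * (ρ * l + Real.sqrt (l ^ 2 + 1)))
      (b * (ρ + l / Real.sqrt (l ^ 2 + 1))) l := by
    intro l
    have h3 : HasDerivAt (fun l : ℝ => ρ * l) ρ l := by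
      simpa using (hasDerivAt_id l).const_mul ρ
    exact ((h3.add (hsq l)).const_mul b).const_add α
  set F : ℝ → ℝ := fun l => b * (ρ + l / Real.sqrt (l ^ 2 + 1)) with hF
  have hN' : deriv (fun l => α + b * (ρ * l + Real.sqrt (l ^ 2 + 1))) = F :=
    funext fun l => (hNd l).deriv
  -- F is differentiable
  have hFd : ∀ l : ℝ, DifferentiableAt ℝ F l := by
    intro l
    have := (hsq l).differentiableAt
    exact ((differentiableAt_id.div this (ne_of_gt (ht l))).const_add ρ).const_mul b
  -- inner map
  have hin : ∀ k : ℝ, HasDerivAt (fun k : ℝ => k / σ - μ) (1 / σ) k := by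
    intro k
    simpa using ((hasDerivAt_id k).div_const σ).sub_const μ
  -- derivative of w
  have hwd : ∀ k : ℝ, HasDerivAt (fun k => σ * (α + b * (ρ * (k / σ - μ) +
      Real.sqrt ((k / σ - μ) ^ 2 + 1)))) (F (k / σ - μ)) k := by
    intro k
    have h := ((hNd (k / σ - μ)).comp k (hin k)).const_mul σ
    have hv : σ * (b * (ρ + (k / σ - μ) / Real.sqrt ((k / σ - μ) ^ 2 + 1)) * (1 / σ)) =
        F (k / σ - μ) := by
      rw [hF]; field_simp
    rw [hv] at h
    simpa [Function.comp] using h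
  have hw' : deriv (fun k => σ * (α + b * (ρ * (k / σ - μ) +
      Real.sqrt ((k / σ - μ) ^ 2 + 1)))) = fun k => F (k / σ - μ) :=
    funext fun k => (hwd k).deriv
  -- second derivative of w
  have hw'' : ∀ k : ℝ, deriv (fun k : ℝ => F (k / σ - μ)) k = deriv F (k / σ - μ) * (1 / σ) := by
    intro k
    exact (((hFd (k / σ - μ)).hasDerivAt).comp k (hin k)).deriv
  constructor
  · intro k
    exact mul_pos hσ (hNpos _)
  · intro l
    have hkl : σ * (l + μ) / σ - μ = l := by field_simp; ring
    rw [hg, hG₁, hG₂, hw', hw'', hN', hkl]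
    simp only [hkl]
    set A := F l
    set B := deriv F l
    have hn := hNpos l
    set nl := α + b * (ρ * l + Real.sqrt (l ^ 2 + 1))
    have hσ' : σ ≠ 0 := ne_of_gt hσ
    have hn' : nl ≠ 0 := ne_of_gt hn
    field_simp
    ring
end

section
/- Let b > 0, ρ ∈ (−1,1), α ∈ ℝ with α + b√(1−ρ²) > 0, N(l) = α + b(ρl + √(l²+1)), and fix μ ∈ ℝ. Let G₁(l) = (1 − N'(l)((l+μ)/(2N(l)) + 1/4))·(1 − N'(l)((l+μ)/(2N(l)) − 1/4)). Then lim_{l→±∞} G₁(l) = (1/2 − b(ρ±1)/4)·(1/2 + b(ρ±1)/4). In particular both limits are nonnegative if and only if b(1+ρ) ≤ 2 and b(1−ρ) ≤ 2. -/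
open Filter Real Topology

lemma svi_inv_atBot : Filter.Tendsto (fun l : ℝ => (1:ℝ) / l) atBot (nhds 0) := by
  have h1 : Tendsto (fun l : ℝ => (-l)⁻¹) atBot (nhds 0) :=
    tendsto_inv_atTop_zero.comp tendsto_neg_atBot_atTop
  have h2 := h1.neg
  simp only [inv_neg, neg_neg, neg_zero] at h2
  simpa [one_div] using h2

lemma svi_sqrt_div_atTop :
    Tendsto (fun l : ℝ => Real.sqrt (l ^ 2 + 1) / l) atTop (nhds 1) := by
  have h0 : Tendsto (fun l : ℝ => 1 + (1 / l) ^ 2) atTop (nhds 1) := by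
    have : Tendsto (fun l : ℝ => (1 : ℝ) / l) atTop (nhds 0) := by
      simpa [one_div] using tendsto_inv_atTop_zero
    simpa using tendsto_const_nhds.add (this.pow 2)
  have h : Tendsto (fun l : ℝ => Real.sqrt (1 + (1 / l) ^ 2)) atTop (nhds 1) := by
    simpa [Function.comp_def] using (Real.continuous_sqrt.tendsto 1).comp h0
  refine Tendsto.congr' ?_ h
  filter_upwards [eventually_gt_atTop (0 : ℝ)] with l hl
  rw [show (1 : ℝ) + (1 / l) ^ 2 = (l ^ 2 + 1) / l ^ 2 by field_simp,
      Real.sqrt_div (by positivity), Real.sqrt_sq hl.le]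

lemma svi_sqrt_div_atBot :
    Tendsto (fun l : ℝ => Real.sqrt (l ^ 2 + 1) / l) atBot (nhds (-1)) := by
  have h0 : Tendsto (fun l : ℝ => 1 + (1 / l) ^ 2) atBot (nhds 1) := by
    simpa using tendsto_const_nhds.add (svi_inv_atBot.pow 2)
  have h : Tendsto (fun l : ℝ => -Real.sqrt (1 + (1 / l) ^ 2)) atBot (nhds (-1)) := by
    have := (Real.continuous_sqrt.tendsto 1).comp h0
    have h1 : Tendsto (fun l : ℝ => Real.sqrt (1 + (1 / l) ^ 2)) atBot (nhds 1) := by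
      simpa [Function.comp_def] using this
    simpa using h1.neg
  refine Tendsto.congr' ?_ h
  filter_upwards [eventually_lt_atBot (0 : ℝ)] with l hl
  have hl' : l ≠ 0 := hl.ne
  have h1 : Real.sqrt (1 + (1 / l) ^ 2) = Real.sqrt (l ^ 2 + 1) / (-l) := by
    rw [show (1 : ℝ) + (1 / l) ^ 2 = (l ^ 2 + 1) / (-l) ^ 2 by field_simp,
        Real.sqrt_div (by positivity), Real.sqrt_sq (by linarith)]
  rw [h1, div_neg, neg_neg]

lemma svi_G1_aux {F : Filter ℝ} (G₁ N' Q : ℝ → ℝ) (c : ℝ) (hc : c ≠ 0)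
    (hG : ∀ l, G₁ l = (1 - N' l * (Q l + 1 / 4)) * (1 - N' l * (Q l - 1 / 4)))
    (h1 : Tendsto N' F (nhds c)) (h2 : Tendsto Q F (nhds (1 / (2 * c)))) :
    Tendsto G₁ F (nhds ((1 / 2 - c / 4) * (1 / 2 + c / 4))) := by
  have hA : Tendsto (fun l => 1 - N' l * (Q l + 1 / 4)) F
      (nhds (1 - c * (1 / (2 * c) + 1 / 4))) :=
    tendsto_const_nhds.sub (h1.mul (h2.add tendsto_const_nhds))
  have hB : Tendsto (fun l => 1 - N' l * (Q l - 1 / 4)) F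
      (nhds (1 - c * (1 / (2 * c) - 1 / 4))) :=
    tendsto_const_nhds.sub (h1.mul (h2.sub tendsto_const_nhds))
  have h := hA.mul hB
  have heq : (1 - c * (1 / (2 * c) + 1 / 4)) * (1 - c * (1 / (2 * c) - 1 / 4))
      = (1 / 2 - c / 4) * (1 / 2 + c / 4) := by
    field_simp; ring
  rw [← heq]
  exact Tendsto.congr (fun l => (hG l).symm) h

/-- Limits of `G₁`: the first term `G₁` of the Durrleman
decomposition of the SVI smile satisfies
`lim_{l→±∞} G₁(l) = (1/2 − b(ρ±1)/4)(1/2 + b(ρ±1)/4)`, and both limits are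
nonnegative iff `b(1+ρ) ≤ 2` and `b(1−ρ) ≤ 2`. -/
theorem G1_limits_at_infinity
    (b ρ α μ : ℝ) (hb : 0 < b) (hρ₁ : -1 < ρ) (hρ₂ : ρ < 1)
    (hα : 0 < α + b * Real.sqrt (1 - ρ ^ 2))
    (N N' G₁ : ℝ → ℝ)
    (hN : ∀ l, N l = α + b * (ρ * l + Real.sqrt (l ^ 2 + 1)))
    (hN' : ∀ l, HasDerivAt N (N' l) l)
    (hG₁ : ∀ l, G₁ l =
        (1 - N' l * ((l + μ) / (2 * N l) + 1 / 4)) *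
        (1 - N' l * ((l + μ) / (2 * N l) - 1 / 4))) :
    Filter.Tendsto G₁ Filter.atTop
      (nhds ((1 / 2 - b * (ρ + 1) / 4) * (1 / 2 + b * (ρ + 1) / 4))) ∧
    Filter.Tendsto G₁ Filter.atBot
      (nhds ((1 / 2 - b * (ρ - 1) / 4) * (1 / 2 + b * (ρ - 1) / 4))) ∧
    ((0 ≤ (1 / 2 - b * (ρ + 1) / 4) * (1 / 2 + b * (ρ + 1) / 4) ∧
      0 ≤ (1 / 2 - b * (ρ - 1) / 4) * (1 / 2 + b * (ρ - 1) / 4)) ↔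
      (b * (1 + ρ) ≤ 2 ∧ b * (1 - ρ) ≤ 2)) := by
  have hNpos : ∀ l, 0 < N l := by
    intro l
    rw [hN l]
    have hs : Real.sqrt (l ^ 2 + 1) ≥ 0 := Real.sqrt_nonneg _
    have ht : Real.sqrt (1 - ρ ^ 2) ≥ 0 := Real.sqrt_nonneg _
    have hs2 : Real.sqrt (l ^ 2 + 1) ^ 2 = l ^ 2 + 1 := Real.sq_sqrt (by positivity)
    have ht2 : Real.sqrt (1 - ρ ^ 2) ^ 2 = 1 - ρ ^ 2 := Real.sq_sqrt (by nlinarith)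
    have key : ρ * l + Real.sqrt (l ^ 2 + 1) ≥ Real.sqrt (1 - ρ ^ 2) := by
      nlinarith [sq_nonneg (Real.sqrt (1 - ρ ^ 2) * l + ρ),
        sq_nonneg (Real.sqrt (l ^ 2 + 1) + Real.sqrt (1 - ρ ^ 2) - ρ * l),
        sq_nonneg (Real.sqrt (l ^ 2 + 1) - Real.sqrt (1 - ρ ^ 2) + ρ * l)]
    nlinarith
  have hN'eq : ∀ l, N' l = b * (ρ + l / Real.sqrt (l ^ 2 + 1)) := by
    intro l
    have hspos : 0 < Real.sqrt (l ^ 2 + 1) := Real.sqrt_pos.mpr (by positivity)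
    have h1 : HasDerivAt (fun x : ℝ => x ^ 2 + 1) (2 * l) l := by
      simpa using (hasDerivAt_pow 2 l).add_const 1
    have h2 : HasDerivAt (fun x : ℝ => Real.sqrt (x ^ 2 + 1))
        (1 / (2 * Real.sqrt (l ^ 2 + 1)) * (2 * l)) l :=
      (Real.hasDerivAt_sqrt (by positivity)).comp l h1
    have h3 : HasDerivAt (fun x : ℝ => α + b * (ρ * x + Real.sqrt (x ^ 2 + 1)))
        (b * (ρ + l / Real.sqrt (l ^ 2 + 1))) l := by
      have h4 := (((hasDerivAt_id l).const_mul ρ).add h2).const_mul b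
      have h5 : HasDerivAt (fun x : ℝ => α + b * (ρ * x + Real.sqrt (x ^ 2 + 1)))
          (b * (ρ * 1 + 1 / (2 * Real.sqrt (l ^ 2 + 1)) * (2 * l))) l := h4.const_add α
      convert h5 using 1
      rw [div_mul_eq_mul_div, one_mul, mul_div_mul_left _ _ (two_ne_zero' ℝ)]
      ring
    have hfun : N = fun x : ℝ => α + b * (ρ * x + Real.sqrt (x ^ 2 + 1)) := funext hN
    rw [hfun] at hN'
    exact (hN' l).unique h3
  have hlimtop : Tendsto (fun l : ℝ => l / Real.sqrt (l ^ 2 + 1)) atTop (nhds 1) := by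
    have := svi_sqrt_div_atTop.inv₀ one_ne_zero
    simpa [inv_div] using this
  have hlimbot : Tendsto (fun l : ℝ => l / Real.sqrt (l ^ 2 + 1)) atBot (nhds (-1)) := by
    have h := svi_sqrt_div_atBot.inv₀ (by norm_num)
    rw [show ((-1 : ℝ))⁻¹ = -1 by norm_num] at h
    simpa [inv_div] using h
  have hN'top : Tendsto N' atTop (nhds (b * (ρ + 1))) := by
    have h' : Tendsto (fun l : ℝ => b * (ρ + l / Real.sqrt (l ^ 2 + 1))) atTop
        (nhds (b * (ρ + 1))) := tendsto_const_nhds.mul (tendsto_const_nhds.add hlimtop)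
    exact Tendsto.congr (fun l => (hN'eq l).symm) h'
  have hN'bot : Tendsto N' atBot (nhds (b * (ρ - 1))) := by
    have h' : Tendsto (fun l : ℝ => b * (ρ + l / Real.sqrt (l ^ 2 + 1))) atBot
        (nhds (b * (ρ + -1))) := tendsto_const_nhds.mul (tendsto_const_nhds.add hlimbot)
    exact Tendsto.congr (fun l => (hN'eq l).symm) (by simpa [sub_eq_add_neg] using h')
  have hNdivtop : Tendsto (fun l : ℝ => N l / l) atTop (nhds (b * (ρ + 1))) := by
    have hinv : Tendsto (fun l : ℝ => (1 : ℝ) / l) atTop (nhds 0) := by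
      simpa [one_div] using tendsto_inv_atTop_zero
    have h' : Tendsto (fun l : ℝ => α * (1 / l) + b * (ρ + Real.sqrt (l ^ 2 + 1) / l))
        atTop (nhds (b * (ρ + 1))) := by
      simpa using (tendsto_const_nhds.mul hinv).add
        (tendsto_const_nhds.mul (tendsto_const_nhds.add svi_sqrt_div_atTop))
    refine Tendsto.congr' ?_ h'
    filter_upwards [eventually_gt_atTop (0 : ℝ)] with l hl
    rw [hN l]
    field_simp
  have hNdivbot : Tendsto (fun l : ℝ => N l / l) atBot (nhds (b * (ρ - 1))) := by
    have hA : Tendsto (fun l : ℝ => α * (1 / l)) atBot (nhds (α * 0)) :=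
      tendsto_const_nhds.mul svi_inv_atBot
    have hB : Tendsto (fun l : ℝ => b * (ρ + Real.sqrt (l ^ 2 + 1) / l)) atBot
        (nhds (b * (ρ + -1))) :=
      tendsto_const_nhds.mul (tendsto_const_nhds.add svi_sqrt_div_atBot)
    have h' : Tendsto (fun l : ℝ => α * (1 / l) + b * (ρ + Real.sqrt (l ^ 2 + 1) / l))
        atBot (nhds (b * (ρ - 1))) := by
      simpa [sub_eq_add_neg] using hA.add hB
    refine Tendsto.congr' ?_ h'
    filter_upwards [eventually_lt_atBot (0 : ℝ)] with l hl
    have hl' : l ≠ 0 := hl.ne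
    rw [hN l]
    field_simp
  have hx : 0 < b * (ρ + 1) := mul_pos hb (by linarith)
  have hctop : b * (ρ + 1) ≠ 0 := hx.ne'
  have hcbot : b * (ρ - 1) ≠ 0 := by
    intro h
    rcases mul_eq_zero.mp h with h | h
    · exact absurd h (ne_of_gt hb)
    · linarith
  have hnumtop : Tendsto (fun l : ℝ => (l + μ) / l) atTop (nhds 1) := by
    have hinv : Tendsto (fun l : ℝ => (1 : ℝ) / l) atTop (nhds 0) := by
      simpa [one_div] using tendsto_inv_atTop_zero
    have h : Tendsto (fun l : ℝ => 1 + μ * (1 / l)) atTop (nhds 1) := by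
      simpa using tendsto_const_nhds.add (tendsto_const_nhds.mul hinv)
    refine Tendsto.congr' ?_ h
    filter_upwards [eventually_gt_atTop (0 : ℝ)] with l hl
    field_simp
  have hnumbot : Tendsto (fun l : ℝ => (l + μ) / l) atBot (nhds 1) := by
    have h : Tendsto (fun l : ℝ => 1 + μ * (1 / l)) atBot (nhds 1) := by
      simpa using tendsto_const_nhds.add (tendsto_const_nhds.mul svi_inv_atBot)
    refine Tendsto.congr' ?_ h
    filter_upwards [eventually_lt_atBot (0 : ℝ)] with l hl
    have hl' : l ≠ 0 := hl.ne
    field_simp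
  have hQeq : ∀ l : ℝ, l ≠ 0 →
      (l + μ) / (2 * N l) = ((l + μ) / l) / (2 * (N l / l)) := by
    intro l hl
    have hNl := (hNpos l).ne'
    field_simp
  have hQtop : Tendsto (fun l : ℝ => (l + μ) / (2 * N l)) atTop
      (nhds (1 / (2 * (b * (ρ + 1))))) := by
    have h := hnumtop.div (tendsto_const_nhds.mul hNdivtop)
      (mul_ne_zero two_ne_zero hctop)
    refine Tendsto.congr' ?_ h
    filter_upwards [eventually_gt_atTop (0 : ℝ)] with l hl
    exact (hQeq l hl.ne').symm
  have hQbot : Tendsto (fun l : ℝ => (l + μ) / (2 * N l)) atBot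
      (nhds (1 / (2 * (b * (ρ - 1))))) := by
    have h := hnumbot.div (tendsto_const_nhds.mul hNdivbot)
      (mul_ne_zero two_ne_zero hcbot)
    refine Tendsto.congr' ?_ h
    filter_upwards [eventually_lt_atBot (0 : ℝ)] with l hl
    exact (hQeq l hl.ne).symm
  refine ⟨svi_G1_aux G₁ N' _ _ hctop hG₁ hN'top hQtop,
    svi_G1_aux G₁ N' _ _ hcbot hG₁ hN'bot hQbot, ?_⟩
  have hy : b * (ρ - 1) < 0 := mul_neg_of_pos_of_neg hb (by linarith)
  constructor
  · rintro ⟨h1, h2⟩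
    exact ⟨by nlinarith, by nlinarith⟩
  · rintro ⟨h1, h2⟩
    exact ⟨by nlinarith, by nlinarith⟩
end

section
/- Let b > 0, ρ ∈ (−1,1), α ∈ ℝ with α + b√(1−ρ²) > 0, and b(1+ρ) < 2, b(1−ρ) < 2. Let N(l) = α + b(ρl + √(l²+1)), l* = −ρ/√(1−ρ²), L₊(l) = 2N(l)(1/N'(l) − 1/4) − l for l > l*, and L₋(l) = 2N(l)(1/N'(l) + 1/4) − l for l < l*. Define g₊(l) = (ρ√(l²+1)+l)²(√(l²+1)(1/2 − bρ/4) − bl/4) − (ρl+√(l²+1)) and g₋(l) = (ρ√(l²+1)+l)²(√(l²+1)(1/2 + bρ/4) + bl/4) − (ρl+√(l²+1)). Then for l > l*, (d/dl)L₊(l) = 1 − N'(l)/2 − 2N(l)N''(l)/N'(l)², and (d/dl)L₊(l) = 0 if and only if g₊(l) = α/b; and for l < l*, (d/dl)L₋(l) = 1 + N'(l)/2 − 2N(l)N''(l)/N'(l)², and (d/dl)L₋(l) = 0 if and only if g₋(l) = α/b. -/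
lemma sqrt_sq_add_one_hasDeriv (x : ℝ) :
    HasDerivAt (fun y : ℝ => Real.sqrt (y ^ 2 + 1)) (x / Real.sqrt (x ^ 2 + 1)) x := by
  have h0 : (0:ℝ) < x ^ 2 + 1 := by positivity
  have hs : 0 < Real.sqrt (x ^ 2 + 1) := Real.sqrt_pos.2 h0
  have h1 : HasDerivAt (fun y : ℝ => y ^ 2 + 1) (2 * x) x := by
    simpa using (hasDerivAt_pow 2 x).add_const 1
  have h2 := (Real.hasDerivAt_sqrt h0.ne').comp x h1
  refine h2.congr_deriv ?_
  field_simp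

lemma pos_side (ρ l : ℝ) (hρ₁ : -1 < ρ) (hρ₂ : ρ < 1)
    (hl : -ρ / Real.sqrt (1 - ρ ^ 2) < l) :
    0 < ρ * Real.sqrt (l ^ 2 + 1) + l := by
  set c := Real.sqrt (1 - ρ ^ 2) with hc
  have hc0 : (0:ℝ) < 1 - ρ ^ 2 := by nlinarith
  have hcpos : 0 < c := Real.sqrt_pos.2 hc0
  have hc2 : c ^ 2 = 1 - ρ ^ 2 := Real.sq_sqrt hc0.le
  set s := Real.sqrt (l ^ 2 + 1) with hs
  have hspos : 0 < s := Real.sqrt_pos.2 (by positivity)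
  have hs2 : s ^ 2 = l ^ 2 + 1 := Real.sq_sqrt (by positivity)
  have h1 : 0 < l * c + ρ := by
    rw [div_lt_iff₀ hcpos] at hl
    linarith
  by_contra h
  push_neg at h
  rcases le_or_gt 0 ρ with hρ | hρ
  · have hl0 : l ≤ 0 := by nlinarith
    have hlc : l * c ≤ 0 := mul_nonpos_of_nonpos_of_nonneg hl0 hcpos.le
    have key1 : l ^ 2 ≥ ρ ^ 2 * s ^ 2 := by
      nlinarith [mul_nonneg_of_nonpos_of_nonpos h (by nlinarith : l - ρ * s ≤ 0)]
    have key2 : ρ ^ 2 ≤ l ^ 2 * c ^ 2 := by nlinarith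
    have h3 : 0 < ρ - l * c := by linarith
    nlinarith [mul_pos h1 h3]
  · have hl0 : 0 < l := by nlinarith
    have key1 : ρ ^ 2 * s ^ 2 ≥ l ^ 2 := by
      nlinarith [mul_nonneg_of_nonpos_of_nonpos h (by nlinarith : ρ * s - l ≤ 0)]
    have key2 : ρ ^ 2 ≥ l ^ 2 * c ^ 2 := by nlinarith
    have h3 : 0 < l * c - ρ := by nlinarith [mul_pos hl0 hcpos]
    nlinarith [mul_pos h1 h3]

lemma sqrt_cube (l : ℝ) :
    (l ^ 2 + 1) ^ ((3 : ℝ) / 2) = Real.sqrt (l ^ 2 + 1) ^ 3 := by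
  have h0 : (0:ℝ) < l ^ 2 + 1 := by positivity
  rw [Real.sqrt_eq_rpow, ← Real.rpow_natCast _ 3, ← Real.rpow_mul h0.le]
  norm_num

lemma key_identity (b ρ α l ε : ℝ) (hb : b ≠ 0)
    (hQ : ρ * Real.sqrt (l ^ 2 + 1) + l ≠ 0) :
    (1 - ε * (b * (ρ + l / Real.sqrt (l ^ 2 + 1))) / 2 -
      2 * (α + b * (ρ * l + Real.sqrt (l ^ 2 + 1))) *
        (b / (l ^ 2 + 1) ^ ((3 : ℝ) / 2)) /
        (b * (ρ + l / Real.sqrt (l ^ 2 + 1))) ^ 2) *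
      (Real.sqrt (l ^ 2 + 1) * (ρ * Real.sqrt (l ^ 2 + 1) + l) ^ 2 / 2) =
    ((ρ * Real.sqrt (l ^ 2 + 1) + l) ^ 2 *
        (Real.sqrt (l ^ 2 + 1) * (1 / 2 - ε * (b * ρ) / 4) - ε * (b * l) / 4) -
      (ρ * l + Real.sqrt (l ^ 2 + 1))) - α / b := by
  have h0 : (0:ℝ) < l ^ 2 + 1 := by positivity
  set s := Real.sqrt (l ^ 2 + 1) with hsdef
  have hspos : 0 < s := Real.sqrt_pos.2 h0
  rw [sqrt_cube]
  have hne : ρ + l / s ≠ 0 := by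
    have : ρ + l / s = (ρ * s + l) / s := by field_simp
    rw [this]
    exact div_ne_zero hQ hspos.ne'
  field_simp
  ring

/-- derivative formulas for `L₊` (on `l > l*`) and `L₋` (on
`l < l*`), and the characterization of their critical points through
`g₊(l) = α/b` and `g₋(l) = α/b`. -/
theorem L_pm_derivative_and_critical_points
    (b ρ α : ℝ) (hb : 0 < b) (hρ₁ : -1 < ρ) (hρ₂ : ρ < 1)
    (hα : 0 < α + b * Real.sqrt (1 - ρ ^ 2))
    (h₁ : b * (1 + ρ) < 2) (h₂ : b * (1 - ρ) < 2)
    (lstar : ℝ) (hlstar : lstar = -ρ / Real.sqrt (1 - ρ ^ 2))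
    (N N' N'' Lp Lm gp gm : ℝ → ℝ)
    (hN : ∀ l, N l = α + b * (ρ * l + Real.sqrt (l ^ 2 + 1)))
    (hN' : ∀ l, N' l = b * (ρ + l / Real.sqrt (l ^ 2 + 1)))
    (hN'' : ∀ l, N'' l = b / (l ^ 2 + 1) ^ ((3 : ℝ) / 2))
    (hLp : ∀ l, lstar < l → Lp l = 2 * N l * (1 / N' l - 1 / 4) - l)
    (hLm : ∀ l, l < lstar → Lm l = 2 * N l * (1 / N' l + 1 / 4) - l)
    (hgp : ∀ l, gp l = (ρ * Real.sqrt (l ^ 2 + 1) + l) ^ 2 *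
        (Real.sqrt (l ^ 2 + 1) * (1 / 2 - b * ρ / 4) - b * l / 4) -
        (ρ * l + Real.sqrt (l ^ 2 + 1)))
    (hgm : ∀ l, gm l = (ρ * Real.sqrt (l ^ 2 + 1) + l) ^ 2 *
        (Real.sqrt (l ^ 2 + 1) * (1 / 2 + b * ρ / 4) + b * l / 4) -
        (ρ * l + Real.sqrt (l ^ 2 + 1))) :
    (∀ l, lstar < l →
      HasDerivAt Lp (1 - N' l / 2 - 2 * N l * N'' l / (N' l) ^ 2) l ∧
      (1 - N' l / 2 - 2 * N l * N'' l / (N' l) ^ 2 = 0 ↔ gp l = α / b)) ∧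
    (∀ l, l < lstar →
      HasDerivAt Lm (1 + N' l / 2 - 2 * N l * N'' l / (N' l) ^ 2) l ∧
      (1 + N' l / 2 - 2 * N l * N'' l / (N' l) ^ 2 = 0 ↔ gm l = α / b)) := by
  have hNf : N = fun y => α + b * (ρ * y + Real.sqrt (y ^ 2 + 1)) := funext hN
  have hN'f : N' = fun y => b * (ρ + y / Real.sqrt (y ^ 2 + 1)) := funext hN'
  -- derivative of N is N'
  have hNd : ∀ x : ℝ, HasDerivAt N (N' x) x := by
    intro x
    rw [hNf, hN' x]
    have h := ((((hasDerivAt_id x).const_mul ρ).add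
      (sqrt_sq_add_one_hasDeriv x)).const_mul b).const_add α
    simpa using h
  -- derivative of N' is N''
  have hN'd : ∀ x : ℝ, HasDerivAt N' (N'' x) x := by
    intro x
    have h0 : (0:ℝ) < x ^ 2 + 1 := by positivity
    have hspos : 0 < Real.sqrt (x ^ 2 + 1) := Real.sqrt_pos.2 h0
    have hs2 : Real.sqrt (x ^ 2 + 1) ^ 2 = x ^ 2 + 1 := Real.sq_sqrt h0.le
    rw [hN'f, hN'' x]
    have hdiv := (hasDerivAt_id x).div (sqrt_sq_add_one_hasDeriv x) hspos.ne'
    have h := (hdiv.const_add ρ).const_mul b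
    refine h.congr_deriv ?_
    rw [sqrt_cube]
    field_simp
    simp only [id_eq]
    linear_combination hs2
  constructor
  · -- plus side
    intro l hl
    have h0 : (0:ℝ) < l ^ 2 + 1 := by positivity
    have hspos : 0 < Real.sqrt (l ^ 2 + 1) := Real.sqrt_pos.2 h0
    have hQ : 0 < ρ * Real.sqrt (l ^ 2 + 1) + l := by
      apply pos_side ρ l hρ₁ hρ₂
      rw [← hlstar]; exact hl
    have hN'pos : 0 < N' l := by
      rw [hN' l]
      have h1 : ρ + l / Real.sqrt (l ^ 2 + 1)
          = (ρ * Real.sqrt (l ^ 2 + 1) + l) / Real.sqrt (l ^ 2 + 1) := by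
        field_simp
      rw [h1]
      exact mul_pos hb (div_pos hQ hspos)
    have hN'ne : N' l ≠ 0 := hN'pos.ne'
    constructor
    · -- derivative
      have hG : HasDerivAt (fun y => 2 * N y / N' y - N y / 2 - y)
          ((2 * N' l * N' l - 2 * N l * N'' l) / (N' l) ^ 2 - N' l / 2 - 1) l := by
        exact ((((hNd l).const_mul 2).div (hN'd l) hN'ne).sub ((hNd l).div_const 2)).sub
          (hasDerivAt_id l)
      have heq : Lp =ᶠ[nhds l] fun y => 2 * N y / N' y - N y / 2 - y := by
        filter_upwards [eventually_gt_nhds hl] with y hy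
        rw [hLp y hy]; ring
      have hD : (2 * N' l * N' l - 2 * N l * N'' l) / (N' l) ^ 2 - N' l / 2 - 1
          = 1 - N' l / 2 - 2 * N l * N'' l / (N' l) ^ 2 := by
        field_simp
        ring
      rw [← hD]
      exact hG.congr_of_eventuallyEq heq
    · -- critical point iff
      have key := key_identity b ρ α l 1 hb.ne' hQ.ne'
      have keyE : (1 - N' l / 2 - 2 * N l * N'' l / (N' l) ^ 2) *
          (Real.sqrt (l ^ 2 + 1) * (ρ * Real.sqrt (l ^ 2 + 1) + l) ^ 2 / 2)
          = gp l - α / b := by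
        rw [hN l, hN' l, hN'' l, hgp l]
        linear_combination key
      have hM : 0 < Real.sqrt (l ^ 2 + 1) * (ρ * Real.sqrt (l ^ 2 + 1) + l) ^ 2 / 2 :=
        by positivity
      constructor
      · intro h0'
        rw [h0', zero_mul] at keyE
        linarith
      · intro h0'
        rw [h0', sub_self] at keyE
        exact (mul_eq_zero.1 keyE).resolve_right hM.ne'
  · -- minus side
    intro l hl
    have h0 : (0:ℝ) < l ^ 2 + 1 := by positivity
    have hspos : 0 < Real.sqrt (l ^ 2 + 1) := Real.sqrt_pos.2 h0
    have hQ : ρ * Real.sqrt (l ^ 2 + 1) + l < 0 := by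
      have hc0 : (0:ℝ) < 1 - ρ ^ 2 := by nlinarith
      have hcpos : 0 < Real.sqrt (1 - ρ ^ 2) := Real.sqrt_pos.2 hc0
      have h' := pos_side (-ρ) (-l) (by linarith) (by linarith) (by
        rw [show (1 - (-ρ) ^ 2) = 1 - ρ ^ 2 by ring, neg_neg]
        rw [hlstar] at hl
        have : ρ / Real.sqrt (1 - ρ ^ 2) = -(-ρ / Real.sqrt (1 - ρ ^ 2)) := by ring
        rw [this]
        linarith)
      rw [show ((-l) ^ 2 : ℝ) = l ^ 2 by ring] at h'
      linarith
    have hN'neg : N' l < 0 := by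
      rw [hN' l]
      have h1 : ρ + l / Real.sqrt (l ^ 2 + 1)
          = (ρ * Real.sqrt (l ^ 2 + 1) + l) / Real.sqrt (l ^ 2 + 1) := by
        field_simp
      rw [h1]
      exact mul_neg_of_pos_of_neg hb (div_neg_of_neg_of_pos hQ hspos)
    have hN'ne : N' l ≠ 0 := hN'neg.ne
    constructor
    · have hG : HasDerivAt (fun y => 2 * N y / N' y + N y / 2 - y)
          ((2 * N' l * N' l - 2 * N l * N'' l) / (N' l) ^ 2 + N' l / 2 - 1) l := by
        exact ((((hNd l).const_mul 2).div (hN'd l) hN'ne).add ((hNd l).div_const 2)).sub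
          (hasDerivAt_id l)
      have heq : Lm =ᶠ[nhds l] fun y => 2 * N y / N' y + N y / 2 - y := by
        filter_upwards [eventually_lt_nhds hl] with y hy
        rw [hLm y hy]; ring
      have hD : (2 * N' l * N' l - 2 * N l * N'' l) / (N' l) ^ 2 + N' l / 2 - 1
          = 1 + N' l / 2 - 2 * N l * N'' l / (N' l) ^ 2 := by
        field_simp
        ring
      rw [← hD]
      exact hG.congr_of_eventuallyEq heq
    · have key := key_identity b ρ α l (-1) hb.ne' hQ.ne
      have keyE : (1 + N' l / 2 - 2 * N l * N'' l / (N' l) ^ 2) *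
          (Real.sqrt (l ^ 2 + 1) * (ρ * Real.sqrt (l ^ 2 + 1) + l) ^ 2 / 2)
          = gm l - α / b := by
        rw [hN l, hN' l, hN'' l, hgm l]
        linear_combination key
      have hM : 0 < Real.sqrt (l ^ 2 + 1) * (ρ * Real.sqrt (l ^ 2 + 1) + l) ^ 2 / 2 := by
        have h2 : 0 < (ρ * Real.sqrt (l ^ 2 + 1) + l) ^ 2 := by nlinarith
        exact div_pos (mul_pos hspos h2) two_pos
      constructor
      · intro h0'
        rw [h0', zero_mul] at keyE
        linarith
      · intro h0'
        rw [h0', sub_self] at keyE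
        exact (mul_eq_zero.1 keyE).resolve_right hM.ne'
end

section
/- Let b > 0, ρ ∈ (−1,1) with b(1+ρ) < 2 and b(1−ρ) < 2, l* = −ρ/√(1−ρ²), and let N'(l) = b(ρ + l/√(l²+1)), N''(l) = b/(l²+1)^{3/2}. Define g₋(l) = (ρ√(l²+1)+l)²(√(l²+1)(1/2 + bρ/4) + bl/4) − (ρl+√(l²+1)) for l < l*, and for x < l* define α(x) = b·g₋(x) and N_x(l) = α(x) + b(ρl + √(l²+1)). Then L₋(x; α(x)) := 2N_x(x)(1/N'(x) + 1/4) − x satisfies the identity L₋(x; α(x)) = (N'(x)²/N''(x))·(1 + N'(x)/2)·(1/N'(x) + 1/4) − x, and consequently lim_{x→l*⁻} L₋(x; α(x)) = −l*. -/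
/-- along the curve `α(x) = b·g₋(x)`, the value
`L₋(x; α(x)) = 2N_x(x)(1/N'(x) + 1/4) − x` has the closed form
`(N'(x)²/N''(x))(1 + N'(x)/2)(1/N'(x) + 1/4) − x`, and tends to `−l*`
as `x → l*⁻`. -/
theorem Lm_along_critical_curve
    (b ρ : ℝ) (hb : 0 < b) (hρ₁ : -1 < ρ) (hρ₂ : ρ < 1)
    (h₁ : b * (1 + ρ) < 2) (h₂ : b * (1 - ρ) < 2)
    (lstar : ℝ) (hlstar : lstar = -ρ / Real.sqrt (1 - ρ ^ 2))
    (N' N'' gm αf : ℝ → ℝ) (Nx : ℝ → ℝ → ℝ) (Lm : ℝ → ℝ)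
    (hN' : ∀ l, N' l = b * (ρ + l / Real.sqrt (l ^ 2 + 1)))
    (hN'' : ∀ l, N'' l = b / (l ^ 2 + 1) ^ ((3 : ℝ) / 2))
    (hgm : ∀ l, gm l = (ρ * Real.sqrt (l ^ 2 + 1) + l) ^ 2 *
        (Real.sqrt (l ^ 2 + 1) * (1 / 2 + b * ρ / 4) + b * l / 4) -
        (ρ * l + Real.sqrt (l ^ 2 + 1)))
    (hαf : ∀ x, αf x = b * gm x)
    (hNx : ∀ x l, Nx x l = αf x + b * (ρ * l + Real.sqrt (l ^ 2 + 1)))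
    (hLm : ∀ x, Lm x = 2 * Nx x x * (1 / N' x + 1 / 4) - x) :
    (∀ x, x < lstar →
      Lm x = (N' x) ^ 2 / N'' x * (1 + N' x / 2) * (1 / N' x + 1 / 4) - x) ∧
    Filter.Tendsto Lm (nhdsWithin lstar (Set.Iio lstar)) (nhds (-lstar)) := by
  have hs0 : ∀ x : ℝ, 0 < Real.sqrt (x ^ 2 + 1) := fun x =>
    Real.sqrt_pos.mpr (by positivity)
  have hs2 : ∀ x : ℝ, Real.sqrt (x ^ 2 + 1) ^ 2 = x ^ 2 + 1 := fun x =>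
    Real.sq_sqrt (by positivity)
  have h3 : ∀ x : ℝ, (x ^ 2 + 1) ^ ((3 : ℝ) / 2) = Real.sqrt (x ^ 2 + 1) ^ 3 := by
    intro x
    rw [Real.sqrt_eq_rpow, ← Real.rpow_natCast ((x ^ 2 + 1) ^ ((1:ℝ)/2)) 3,
      ← Real.rpow_mul (by positivity)]
    norm_num
  have hN''pos : ∀ x : ℝ, 0 < N'' x := by
    intro x
    rw [hN'' x]
    positivity
  -- key algebraic identity
  have key1 : ∀ x : ℝ, 2 * Nx x x = N' x ^ 2 / N'' x * (1 + N' x / 2) := by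
    intro x
    rw [hNx, hαf, hgm, hN', hN'', h3]
    have h1 := hs0 x
    have h2 := hs2 x
    set s := Real.sqrt (x ^ 2 + 1) with hs
    field_simp
    ring
  have eq1 : ∀ x : ℝ,
      Lm x = N' x ^ 2 / N'' x * (1 + N' x / 2) * (1 / N' x + 1 / 4) - x := by
    intro x
    rw [hLm x, key1 x]
  refine ⟨fun x _ => eq1 x, ?_⟩
  -- N'-free closed form
  have key2 : ∀ x : ℝ,
      Lm x = (N' x + N' x ^ 2 / 4) * (1 + N' x / 2) / N'' x - x := by
    intro x
    rw [eq1 x]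
    by_cases hz : N' x = 0
    · rw [hz]; simp
    · have hnz := (hN''pos x).ne'
      field_simp
  have hLmF : Lm = fun x => (b * (ρ + x / Real.sqrt (x ^ 2 + 1)) +
      (b * (ρ + x / Real.sqrt (x ^ 2 + 1))) ^ 2 / 4) *
      (1 + b * (ρ + x / Real.sqrt (x ^ 2 + 1)) / 2) /
      (b / (x ^ 2 + 1) ^ ((3 : ℝ) / 2)) - x := by
    funext x
    rw [key2 x, hN', hN'']
  rw [hLmF]
  -- continuity
  have hcs : Continuous fun x : ℝ => Real.sqrt (x ^ 2 + 1) :=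
    Real.continuous_sqrt.comp (by continuity)
  have hcN' : Continuous fun x : ℝ => b * (ρ + x / Real.sqrt (x ^ 2 + 1)) :=
    continuous_const.mul (continuous_const.add
      (continuous_id.div hcs fun x => (hs0 x).ne'))
  have hcr : Continuous fun x : ℝ => (x ^ 2 + 1) ^ ((3 : ℝ) / 2) :=
    (by continuity : Continuous fun x : ℝ => x ^ 2 + 1).rpow_const
      fun x => Or.inr (by norm_num)
  have hcF : ContinuousAt (fun x : ℝ => (b * (ρ + x / Real.sqrt (x ^ 2 + 1)) +
      (b * (ρ + x / Real.sqrt (x ^ 2 + 1))) ^ 2 / 4) *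
      (1 + b * (ρ + x / Real.sqrt (x ^ 2 + 1)) / 2) /
      (b / (x ^ 2 + 1) ^ ((3 : ℝ) / 2)) - x) lstar := by
    have hdenom : b / (lstar ^ 2 + 1) ^ ((3 : ℝ) / 2) ≠ 0 := by positivity
    exact (((hcN'.add ((hcN'.pow 2).div_const 4)).mul
      (continuous_const.add (hcN'.div_const 2))).continuousAt.div
      ((continuous_const.div hcr fun x => by positivity).continuousAt) hdenom).sub
      continuousAt_id
  -- value at lstar
  have hρ2 : 0 < 1 - ρ ^ 2 := by nlinarith
  have hz : ρ + lstar / Real.sqrt (lstar ^ 2 + 1) = 0 := by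
    have ht0 : 0 < Real.sqrt (1 - ρ ^ 2) := Real.sqrt_pos.mpr hρ2
    have ht2 : Real.sqrt (1 - ρ ^ 2) ^ 2 = 1 - ρ ^ 2 := Real.sq_sqrt hρ2.le
    have hval : lstar ^ 2 + 1 = (1 / Real.sqrt (1 - ρ ^ 2)) ^ 2 := by
      rw [hlstar]
      field_simp
      linarith [ht2]
    have : Real.sqrt (lstar ^ 2 + 1) = 1 / Real.sqrt (1 - ρ ^ 2) := by
      rw [hval, Real.sqrt_sq (by positivity)]
    rw [this, hlstar]
    field_simp
    ring
  have hFval : (b * (ρ + lstar / Real.sqrt (lstar ^ 2 + 1)) +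
      (b * (ρ + lstar / Real.sqrt (lstar ^ 2 + 1))) ^ 2 / 4) *
      (1 + b * (ρ + lstar / Real.sqrt (lstar ^ 2 + 1)) / 2) /
      (b / (lstar ^ 2 + 1) ^ ((3 : ℝ) / 2)) - lstar = -lstar := by
    rw [hz]
    simp
  exact hFval ▸ hcF.continuousWithinAt
end

section
/- Let b > 0, ρ ∈ (−1,1) with b(1+ρ) < 2 and b(1−ρ) < 2, l* = −ρ/√(1−ρ²), and N'(l) = b(ρ + l/√(l²+1)). For α ∈ ℝ let N_α(l) = α + b(ρl + √(l²+1)), L₋(l; α) = 2N_α(l)(1/N'(l) + 1/4) − l for l < l*, and L₊(l; α) = 2N_α(l)(1/N'(l) − 1/4) − l for l > l*. Then: (i) for every l < l*, ∂L₋/∂α (l; α) = 2(1/N'(l) + 1/4) < −1/2; (ii) for every l > l*, ∂L₊/∂α (l; α) = 2(1/N'(l) − 1/4) > 1/2; consequently, for α < α' (both with α + b√(1−ρ²) > 0 and α' + b√(1−ρ²) > 0), one has (inf_{l>l*} L₊(l; α') − sup_{l<l*} L₋(l; α')) ≥ (inf_{l>l*} L₊(l; α) − sup_{l<l*} L₋(l;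 α)) + (α' − α). -/
private lemma svi10_s_lt (ρ l : ℝ) (hρ₁ : -1 < ρ) (hρ₂ : ρ < 1)
    (h : l < -ρ / Real.sqrt (1 - ρ ^ 2)) : l / Real.sqrt (l ^ 2 + 1) < -ρ := by
  have hu : 0 < Real.sqrt (1 - ρ ^ 2) := Real.sqrt_pos.2 (by nlinarith)
  have hv : 0 < Real.sqrt (l ^ 2 + 1) := Real.sqrt_pos.2 (by positivity)
  have hu2 : Real.sqrt (1 - ρ ^ 2) ^ 2 = 1 - ρ ^ 2 := Real.sq_sqrt (by nlinarith)
  have hv2 : Real.sqrt (l ^ 2 + 1) ^ 2 = l ^ 2 + 1 := Real.sq_sqrt (by positivity)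
  set u := Real.sqrt (1 - ρ ^ 2)
  set v := Real.sqrt (l ^ 2 + 1)
  rw [div_lt_iff₀ hv]
  rw [lt_div_iff₀ hu] at h
  rcases le_or_gt ρ 0 with hρ | hρ
  · rcases lt_or_ge l 0 with hl | hl
    · nlinarith [mul_nonneg (neg_nonneg.2 hρ) hv.le]
    · have h1 : l ^ 2 * (1 - ρ ^ 2) < ρ ^ 2 := by nlinarith [mul_nonneg hl hu.le]
      nlinarith [mul_nonneg (neg_nonneg.2 hρ) hv.le]
  · have hl : l < 0 := by
      by_contra hc; push_neg at hc; nlinarith [mul_nonneg hc hu.le]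
    have h1 : ρ ^ 2 < l ^ 2 * (1 - ρ ^ 2) := by nlinarith
    nlinarith [mul_pos hρ hv]

private lemma svi10_s_gt (ρ l : ℝ) (hρ₁ : -1 < ρ) (hρ₂ : ρ < 1)
    (h : -ρ / Real.sqrt (1 - ρ ^ 2) < l) : -ρ < l / Real.sqrt (l ^ 2 + 1) := by
  have h1 : (1 : ℝ) - (-ρ) ^ 2 = 1 - ρ ^ 2 := by ring
  have h2 : (-l : ℝ) ^ 2 + 1 = l ^ 2 + 1 := by ring
  have := svi10_s_lt (-ρ) (-l) (by linarith) (by linarith)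
    (by rw [h1, neg_neg]; rw [neg_div] at h; linarith)
  rw [h2, neg_div, neg_neg] at this
  linarith

private lemma svi10_N_min (ρ l : ℝ) (hρ₁ : -1 < ρ) (hρ₂ : ρ < 1) :
    Real.sqrt (1 - ρ ^ 2) ≤ ρ * l + Real.sqrt (l ^ 2 + 1) := by
  have hu : 0 < Real.sqrt (1 - ρ ^ 2) := Real.sqrt_pos.2 (by nlinarith)
  have hv : 0 ≤ Real.sqrt (l ^ 2 + 1) := Real.sqrt_nonneg _
  have hu2 : Real.sqrt (1 - ρ ^ 2) ^ 2 = 1 - ρ ^ 2 := Real.sq_sqrt (by nlinarith)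
  have hv2 : Real.sqrt (l ^ 2 + 1) ^ 2 = l ^ 2 + 1 := Real.sq_sqrt (by positivity)
  set u := Real.sqrt (1 - ρ ^ 2)
  set v := Real.sqrt (l ^ 2 + 1)
  rcases le_or_gt (u - ρ * l) 0 with hc | hc
  · linarith
  · nlinarith [sq_nonneg (u * l + ρ)]

set_option maxHeartbeats 1000000 in
/-- monotonicity of `L₋`, `L₊` in the parameter `α`:
`∂L₋/∂α = 2(1/N' + 1/4) < −1/2` on `l < l*`, `∂L₊/∂α = 2(1/N' − 1/4) > 1/2`
on `l > l*`; consequently the Fukasawa interval grows at least linearly in `α`. -/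
theorem L_pm_monotone_in_alpha
    (b ρ : ℝ) (hb : 0 < b) (hρ₁ : -1 < ρ) (hρ₂ : ρ < 1)
    (h₁ : b * (1 + ρ) < 2) (h₂ : b * (1 - ρ) < 2)
    (lstar : ℝ) (hlstar : lstar = -ρ / Real.sqrt (1 - ρ ^ 2))
    (N' : ℝ → ℝ) (hN' : ∀ l, N' l = b * (ρ + l / Real.sqrt (l ^ 2 + 1)))
    (Nα : ℝ → ℝ → ℝ) (hNα : ∀ α l, Nα α l = α + b * (ρ * l + Real.sqrt (l ^ 2 + 1)))
    (Lm Lp : ℝ → ℝ → ℝ)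
    (hLm : ∀ α l, Lm α l = 2 * Nα α l * (1 / N' l + 1 / 4) - l)
    (hLp : ∀ α l, Lp α l = 2 * Nα α l * (1 / N' l - 1 / 4) - l) :
    (∀ l, l < lstar → ∀ α : ℝ,
      HasDerivAt (fun a => Lm a l) (2 * (1 / N' l + 1 / 4)) α ∧
      2 * (1 / N' l + 1 / 4) < -(1 / 2)) ∧
    (∀ l, lstar < l → ∀ α : ℝ,
      HasDerivAt (fun a => Lp a l) (2 * (1 / N' l - 1 / 4)) α ∧
      1 / 2 < 2 * (1 / N' l - 1 / 4)) ∧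
    (∀ α α' : ℝ, α < α' →
      0 < α + b * Real.sqrt (1 - ρ ^ 2) → 0 < α' + b * Real.sqrt (1 - ρ ^ 2) →
      sInf ((fun l => Lp α l) '' Set.Ioi lstar) -
          sSup ((fun l => Lm α l) '' Set.Iio lstar) + (α' - α) ≤
        sInf ((fun l => Lp α' l) '' Set.Ioi lstar) -
          sSup ((fun l => Lm α' l) '' Set.Iio lstar)) := by
  have hsv : ∀ l : ℝ, 0 < Real.sqrt (l ^ 2 + 1) := fun l =>
    Real.sqrt_pos.2 (by positivity)
  have hsv2 : ∀ l : ℝ, Real.sqrt (l ^ 2 + 1) ^ 2 = l ^ 2 + 1 := fun l =>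
    Real.sq_sqrt (by positivity)
  have habs : ∀ l : ℝ, -Real.sqrt (l ^ 2 + 1) < l ∧ l < Real.sqrt (l ^ 2 + 1) := by
    intro l
    have h1 := hsv l
    have h2 := hsv2 l
    constructor <;> nlinarith
  have hbp : 0 < b * (1 + ρ) := by nlinarith
  have hbm : b * (ρ - 1) < 0 := by nlinarith
  have hbm2 : -2 < b * (ρ - 1) := by nlinarith
  -- range of N' on each side
  have hNrange_gt : ∀ l, lstar < l → 0 < N' l ∧ N' l < b * (1 + ρ) := by
    intro l hl
    have hs := svi10_s_gt ρ l hρ₁ hρ₂ (by rw [← hlstar]; exact hl)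
    have hs1 : l / Real.sqrt (l ^ 2 + 1) < 1 := by
      rw [div_lt_one (hsv l)]; exact (habs l).2
    rw [hN']
    constructor
    · nlinarith
    · nlinarith
  have hNrange_lt : ∀ l, l < lstar → b * (ρ - 1) < N' l ∧ N' l < 0 := by
    intro l hl
    have hs := svi10_s_lt ρ l hρ₁ hρ₂ (by rw [← hlstar]; exact hl)
    have hs1 : -1 < l / Real.sqrt (l ^ 2 + 1) := by
      rw [neg_lt, ← neg_div, div_lt_one (hsv l)]
      linarith [(habs l).1]
    rw [hN']
    constructor
    · nlinarith
    · nlinarith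
  have key1 : ∀ l, l < lstar → 2 * (1 / N' l + 1 / 4) < -(1 / 2) := by
    intro l hl
    obtain ⟨hg, hneg⟩ := hNrange_lt l hl
    have h2' : -2 < N' l := by linarith
    have : 1 / N' l < -(1 / 2) := by
      rw [div_lt_iff_of_neg hneg]; linarith
    linarith
  have key2 : ∀ l, lstar < l → 1 / 2 < 2 * (1 / N' l - 1 / 4) := by
    intro l hl
    obtain ⟨hpos, hlt⟩ := hNrange_gt l hl
    have h2' : N' l < 2 := by linarith
    have : (1 : ℝ) / 2 < 1 / N' l := by
      rw [div_lt_div_iff₀ (by norm_num) hpos]; linarith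
    linarith
  have hNpos : ∀ a : ℝ, 0 < a + b * Real.sqrt (1 - ρ ^ 2) →
      ∀ l, 0 < a + b * (ρ * l + Real.sqrt (l ^ 2 + 1)) := by
    intro a ha l
    have hm := svi10_N_min ρ l hρ₁ hρ₂
    nlinarith [mul_le_mul_of_nonneg_left hm hb.le]
  -- lower bound for Lp a on Ioi lstar
  have hBddB : ∀ a : ℝ, 0 < a + b * Real.sqrt (1 - ρ ^ 2) →
      min 0 (2 * (1 / (b * (1 + ρ)) - 1 / 4) * a) ∈
        lowerBounds ((fun l => Lp a l) '' Set.Ioi lstar) := by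
    intro a ha
    rintro y ⟨l, hl, rfl⟩
    have hl' : lstar < l := hl
    have hN := hNpos a ha l
    obtain ⟨hN'pos, hN'lt⟩ := hNrange_gt l hl'
    have hw : 1 / (b * (1 + ρ)) ≤ 1 / N' l :=
      one_div_le_one_div_of_le hN'pos hN'lt.le
    have hwpos : (1 : ℝ) / 2 < 1 / (b * (1 + ρ)) := by
      rw [div_lt_div_iff₀ (by norm_num) hbp]; linarith
    simp only [hLp, hNα]
    rcases le_or_gt l 0 with hl0 | hl0
    · have hK : 0 < 1 / N' l - 1 / 4 := by linarith
      have hprod : 0 < (a + b * (ρ * l + Real.sqrt (l ^ 2 + 1))) * (1 / N' l - 1 / 4) :=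
        mul_pos hN hK
      have hmin := min_le_left (0 : ℝ) (2 * (1 / (b * (1 + ρ)) - 1 / 4) * a)
      linarith
    · have hvl : l ≤ Real.sqrt (l ^ 2 + 1) := (habs l).2.le
      have hNge : a + b * (1 + ρ) * l ≤ a + b * (ρ * l + Real.sqrt (l ^ 2 + 1)) := by
        nlinarith [mul_le_mul_of_nonneg_left hvl hb.le]
      have hK : 1 / (b * (1 + ρ)) - 1 / 4 ≤ 1 / N' l - 1 / 4 := by linarith
      have hKpos : 0 < 1 / (b * (1 + ρ)) - 1 / 4 := by linarith
      have hE : b * (1 + ρ) * (1 / (b * (1 + ρ))) = 1 := mul_one_div_cancel hbp.ne'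
      have step1 : 2 * (a + b * (1 + ρ) * l) * (1 / (b * (1 + ρ)) - 1 / 4) ≤
          2 * (a + b * (ρ * l + Real.sqrt (l ^ 2 + 1))) * (1 / N' l - 1 / 4) := by
        nlinarith [mul_nonneg hN.le (sub_nonneg.2 hK),
          mul_nonneg (sub_nonneg.2 hNge) hKpos.le]
      have step2 : 2 * (a + b * (1 + ρ) * l) * (1 / (b * (1 + ρ)) - 1 / 4) - l =
          2 * (1 / (b * (1 + ρ)) - 1 / 4) * a + (1 - b * (1 + ρ) / 2) * l := by
        linear_combination (2 * l) * hE
      have hcoef : 0 ≤ (1 - b * (1 + ρ) / 2) * l :=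
        mul_nonneg (by linarith) hl0.le
      have hmin := min_le_right (0 : ℝ) (2 * (1 / (b * (1 + ρ)) - 1 / 4) * a)
      linarith
  -- upper bound for Lm a on Iio lstar
  have hBddA : ∀ a : ℝ, 0 < a + b * Real.sqrt (1 - ρ ^ 2) →
      max 0 (2 * (1 / (b * (ρ - 1)) + 1 / 4) * a) ∈
        upperBounds ((fun l => Lm a l) '' Set.Iio lstar) := by
    intro a ha
    rintro y ⟨l, hl, rfl⟩
    have hl' : l < lstar := hl
    have hN := hNpos a ha l
    obtain ⟨hN'gt, hN'neg⟩ := hNrange_lt l hl'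
    have hw : 1 / N' l ≤ 1 / (b * (ρ - 1)) :=
      one_div_le_one_div_of_neg_of_le hN'neg hN'gt.le
    have hwneg : 1 / (b * (ρ - 1)) < -(1 / 2) := by
      rw [div_lt_iff_of_neg hbm]; nlinarith
    simp only [hLm, hNα]
    rcases le_or_gt 0 l with hl0 | hl0
    · have hK : 1 / N' l + 1 / 4 < 0 := by linarith
      have hprod : (a + b * (ρ * l + Real.sqrt (l ^ 2 + 1))) * (1 / N' l + 1 / 4) < 0 :=
        mul_neg_of_pos_of_neg hN hK
      have hmax := le_max_left (0 : ℝ) (2 * (1 / (b * (ρ - 1)) + 1 / 4) * a)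
      linarith
    · have hvl : -l ≤ Real.sqrt (l ^ 2 + 1) := (neg_lt_of_neg_lt (habs l).1).le
      have hNge : a + b * (ρ - 1) * l ≤ a + b * (ρ * l + Real.sqrt (l ^ 2 + 1)) := by
        nlinarith [mul_le_mul_of_nonneg_left hvl hb.le]
      have hK : 1 / N' l + 1 / 4 ≤ 1 / (b * (ρ - 1)) + 1 / 4 := by linarith
      have hKneg : 1 / (b * (ρ - 1)) + 1 / 4 < 0 := by linarith
      have hE : b * (ρ - 1) * (1 / (b * (ρ - 1))) = 1 := mul_one_div_cancel hbm.ne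
      have step1 : 2 * (a + b * (ρ * l + Real.sqrt (l ^ 2 + 1))) * (1 / N' l + 1 / 4) ≤
          2 * (a + b * (ρ - 1) * l) * (1 / (b * (ρ - 1)) + 1 / 4) := by
        nlinarith [mul_nonneg hN.le (sub_nonneg.2 hK),
          mul_nonneg (sub_nonneg.2 hNge) (le_of_lt (neg_pos.2 hKneg))]
      have step2 : 2 * (a + b * (ρ - 1) * l) * (1 / (b * (ρ - 1)) + 1 / 4) - l =
          2 * (1 / (b * (ρ - 1)) + 1 / 4) * a + (1 + b * (ρ - 1) / 2) * l := by
        linear_combination (2 * l) * hE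
      have hcoef : (1 + b * (ρ - 1) / 2) * l ≤ 0 :=
        mul_nonpos_of_nonneg_of_nonpos (by linarith) hl0.le
      have hmax := le_max_right (0 : ℝ) (2 * (1 / (b * (ρ - 1)) + 1 / 4) * a)
      linarith
  refine ⟨?_, ?_, ?_⟩
  · intro l hl α
    refine ⟨?_, key1 l hl⟩
    have hfun : (fun a => Lm a l) = fun a =>
        2 * (a + b * (ρ * l + Real.sqrt (l ^ 2 + 1))) * (1 / N' l + 1 / 4) - l := by
      funext a; rw [hLm, hNα]
    rw [hfun]
    have hd := ((((hasDerivAt_id α).add_const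
        (b * (ρ * l + Real.sqrt (l ^ 2 + 1)))).const_mul (2 : ℝ)).mul_const
        (1 / N' l + 1 / 4)).sub_const l
    exact hd.congr_deriv (by ring)
  · intro l hl α
    refine ⟨?_, key2 l hl⟩
    have hfun : (fun a => Lp a l) = fun a =>
        2 * (a + b * (ρ * l + Real.sqrt (l ^ 2 + 1))) * (1 / N' l - 1 / 4) - l := by
      funext a; rw [hLp, hNα]
    rw [hfun]
    have hd := ((((hasDerivAt_id α).add_const
        (b * (ρ * l + Real.sqrt (l ^ 2 + 1)))).const_mul (2 : ℝ)).mul_const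
        (1 / N' l - 1 / 4)).sub_const l
    exact hd.congr_deriv (by ring)
  · intro α α' hlt hpα hpα'
    have hdiffp : ∀ l, Lp α' l = Lp α l + (α' - α) * (2 * (1 / N' l - 1 / 4)) := by
      intro l; rw [hLp, hLp, hNα, hNα]; ring
    have hdiffm : ∀ l, Lm α' l = Lm α l + (α' - α) * (2 * (1 / N' l + 1 / 4)) := by
      intro l; rw [hLm, hLm, hNα, hNα]; ring
    have hA : sInf ((fun l => Lp α l) '' Set.Ioi lstar) + (α' - α) / 2 ≤
        sInf ((fun l => Lp α' l) '' Set.Ioi lstar) := by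
      apply le_csInf (Set.nonempty_Ioi.image _)
      rintro y ⟨l, hl, rfl⟩
      have h1 : sInf ((fun l => Lp α l) '' Set.Ioi lstar) ≤ Lp α l :=
        csInf_le ⟨_, hBddB α hpα⟩ ⟨l, hl, rfl⟩
      have h2 := key2 l hl
      have h3 : (α' - α) * (1 / 2) ≤ (α' - α) * (2 * (1 / N' l - 1 / 4)) :=
        mul_le_mul_of_nonneg_left h2.le (by linarith)
      simp only
      rw [hdiffp l]
      linarith
    have hB : sSup ((fun l => Lm α' l) '' Set.Iio lstar) ≤
        sSup ((fun l => Lm α l) '' Set.Iio lstar) - (α' - α) / 2 := by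
      apply csSup_le (Set.nonempty_Iio.image _)
      rintro y ⟨l, hl, rfl⟩
      have h1 : Lm α l ≤ sSup ((fun l => Lm α l) '' Set.Iio lstar) :=
        le_csSup ⟨_, hBddA α hpα⟩ ⟨l, hl, rfl⟩
      have h2 := key1 l hl
      have h3 : (α' - α) * (2 * (1 / N' l + 1 / 4)) ≤ (α' - α) * (-(1 / 2)) :=
        mul_le_mul_of_nonneg_left h2.le (by linarith)
      simp only
      rw [hdiffm l]
      linarith
    linarith
end

section
/- Let b > 0, ρ ∈ (−1,1) with b(1+ρ) ≤ 2 and b(1−ρ) ≤ 2, α ≥ 0, N(l) = α + b(ρl + √(l²+1)), l* = −ρ/√(1−ρ²). Then for every l < l*, L₋(l) = 2N(l)(1/N'(l) + 1/4) − l < 0, and for every l > l*, L₊(l) = 2N(l)(1/N'(l) − 1/4) − l > 0. In particular μ = 0 satisfies sup_{l<l*} L₋(l) ≤ 0 ≤ inf_{l>l*} L₊(l), so the Fukasawa interval for μ is nonempty whenever α ≥ 0. -/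
private lemma svi_sign_aux (ρ l : ℝ) (hρ₁ : -1 < ρ) (hρ₂ : ρ < 1)
    (hl : l < -ρ / Real.sqrt (1 - ρ ^ 2)) :
    ρ * Real.sqrt (l ^ 2 + 1) + l < 0 := by
  have hρ2pos : (0:ℝ) < 1 - ρ ^ 2 := by nlinarith
  set t := Real.sqrt (1 - ρ ^ 2) with ht_def
  have ht : 0 < t := Real.sqrt_pos.mpr hρ2pos
  have ht2 : t ^ 2 = 1 - ρ ^ 2 := Real.sq_sqrt hρ2pos.le
  set s := Real.sqrt (l ^ 2 + 1) with hs_def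
  have hs : 0 < s := Real.sqrt_pos.mpr (by positivity)
  have hs2 : s ^ 2 = l ^ 2 + 1 := Real.sq_sqrt (by positivity)
  have hlt : l * t < -ρ := (lt_div_iff₀ ht).mp hl
  by_contra hcon
  push_neg at hcon
  have hs2ρ : ρ ^ 2 * s ^ 2 = ρ ^ 2 * (l ^ 2 + 1) := by rw [hs2]
  have ht2l : l ^ 2 * t ^ 2 = l ^ 2 * (1 - ρ ^ 2) := by rw [ht2]
  rcases le_or_gt ρ 0 with hρ0 | hρ0
  · have hl0 : 0 ≤ l := by nlinarith [mul_nonneg (neg_nonneg.mpr hρ0) hs.le]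
    have P1 : 0 ≤ (ρ * s + l) * (l - ρ * s) :=
      mul_nonneg hcon (by nlinarith [mul_nonneg (neg_nonneg.mpr hρ0) hs.le])
    have hρneg : 0 < -ρ := by
      rcases lt_or_eq_of_le hρ0 with h | h
      · linarith
      · exfalso; nlinarith [mul_nonneg hl0 ht.le]
    have P2 : 0 < (-ρ - l * t) * (-ρ + l * t) :=
      mul_pos (by linarith) (by nlinarith [mul_nonneg hl0 ht.le])
    nlinarith [P1, P2, hs2ρ, ht2l]
  · have hl0 : l < 0 := by nlinarith [mul_pos hρ0 ht]
    have P1 : 0 ≤ (ρ * s + l) * (ρ * s - l) :=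
      mul_nonneg hcon (by nlinarith [mul_pos hρ0 hs])
    have P2 : 0 < (-(l * t) - ρ) * (-(l * t) + ρ) :=
      mul_pos (by linarith) (by linarith)
    nlinarith [P1, P2, hs2ρ, ht2l]

set_option maxHeartbeats 1000000 in
/-- for `α ≥ 0` (with `b(1±ρ) ≤ 2`), one has `L₋ < 0` on
`l < l*` and `L₊ > 0` on `l > l*`; in particular
`sup_{l<l*} L₋ ≤ 0 ≤ inf_{l>l*} L₊`, so the Fukasawa interval for `μ` is
nonempty. -/
theorem fukasawa_interval_nonempty_alpha_nonneg
    (b ρ α : ℝ) (hb : 0 < b) (hρ₁ : -1 < ρ) (hρ₂ : ρ < 1)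
    (h₁ : b * (1 + ρ) ≤ 2) (h₂ : b * (1 - ρ) ≤ 2) (hα : 0 ≤ α)
    (lstar : ℝ) (hlstar : lstar = -ρ / Real.sqrt (1 - ρ ^ 2))
    (N N' Lm Lp : ℝ → ℝ)
    (hN : ∀ l, N l = α + b * (ρ * l + Real.sqrt (l ^ 2 + 1)))
    (hN' : ∀ l, N' l = b * (ρ + l / Real.sqrt (l ^ 2 + 1)))
    (hLm : ∀ l, Lm l = 2 * N l * (1 / N' l + 1 / 4) - l)
    (hLp : ∀ l, Lp l = 2 * N l * (1 / N' l - 1 / 4) - l) :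
    (∀ l, l < lstar → Lm l < 0) ∧
    (∀ l, lstar < l → 0 < Lp l) ∧
    sSup (Lm '' Set.Iio lstar) ≤ 0 ∧ 0 ≤ sInf (Lp '' Set.Ioi lstar) := by
  have Hm : ∀ l, l < lstar → Lm l < 0 := by
    intro l hl
    set s := Real.sqrt (l ^ 2 + 1) with hs_def
    have hs : 0 < s := Real.sqrt_pos.mpr (by positivity)
    have hs2 : s ^ 2 = l ^ 2 + 1 := Real.sq_sqrt (by positivity)
    have hlabs : |l| < s := by
      rw [← Real.sqrt_sq_eq_abs, hs_def]
      exact Real.sqrt_lt_sqrt (sq_nonneg l) (by linarith)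
    have hls1 : -s < l := (abs_lt.mp hlabs).1
    have hls2 : l < s := (abs_lt.mp hlabs).2
    have hc : ρ * s + l < 0 := svi_sign_aux ρ l hρ₁ hρ₂ (hlstar ▸ hl)
    have hq : 0 < ρ * l + s := by
      have h1 : |ρ * l| < s := by
        rw [abs_mul]
        calc |ρ| * |l| ≤ 1 * |l| :=
              mul_le_mul_of_nonneg_right (abs_le.mpr ⟨hρ₁.le, hρ₂.le⟩) (abs_nonneg l)
          _ = |l| := one_mul _
          _ < s := hlabs
      have := (abs_lt.mp h1).1
      linarith
    have hNv : N l = α + b * (ρ * l + s) := hN l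
    have hN'v : N' l = b * (ρ * s + l) / s := by
      rw [hN' l, ← hs_def]
      field_simp
      try ring
    have hN'neg : N' l < 0 := by
      rw [hN'v]
      exact div_neg_of_neg_of_pos (mul_neg_of_pos_of_neg hb hc) hs
    have key : 0 < 2 * (α + b * (ρ * l + s)) * s
        + b * (ρ * s + l) * ((α + b * (ρ * l + s)) / 2 - l) := by
      have e1 : (0:ℝ) < l + s := by linarith
      have e2 : (0:ℝ) ≤ 2 - b * (1 - ρ) := by linarith
      have e3 : (0:ℝ) ≤ 4 * s + b * (ρ * s + l) := by
        nlinarith [mul_pos hb e1, mul_nonneg e2 hs.le]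
      have hT1 : 0 ≤ α * (4 * s + b * (ρ * s + l)) := mul_nonneg hα e3
      have hT3 : 0 ≤ (2 - b * (1 - ρ)) * ((ρ * l + s) * (-(ρ * s + l))) :=
        mul_nonneg (by linarith) (mul_nonneg hq.le (by linarith))
      have identity : (1 - ρ) * (2 * (α + b * (ρ * l + s)) * s
            + b * (ρ * s + l) * ((α + b * (ρ * l + s)) / 2 - l))
          = (1 - ρ) * (α * (4 * s + b * (ρ * s + l))) / 2
            + b * ((1 + ρ) * (s + l) ^ 2 + 3 * (1 - ρ)
              + (2 - b * (1 - ρ)) * ((ρ * l + s) * (-(ρ * s + l)))) / 2 := by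
        linear_combination (3 / 2 * b * (1 - ρ)) * hs2
      nlinarith [identity, hT1, hT3,
        mul_nonneg (mul_nonneg hb.le (show (0:ℝ) ≤ 1 + ρ by linarith)) (sq_nonneg (s + l)),
        mul_pos hb (show (0:ℝ) < 3 * (1 - ρ) by linarith),
        mul_nonneg hb.le hT3,
        mul_nonneg (show (0:ℝ) ≤ 1 - ρ by linarith) hT1]
    have hnum : 0 < 2 * N l + N' l * (N l / 2 - l) := by
      have heq : 2 * N l + N' l * (N l / 2 - l)
          = (2 * (α + b * (ρ * l + s)) * s
            + b * (ρ * s + l) * ((α + b * (ρ * l + s)) / 2 - l)) / s := by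
        rw [hNv, hN'v]
        field_simp
      rw [heq]
      exact div_pos key hs
    have hN'ne : N' l ≠ 0 := ne_of_lt hN'neg
    have hLmv : Lm l = (2 * N l + N' l * (N l / 2 - l)) / N' l := by
      rw [hLm l]
      field_simp
      ring
    rw [hLmv]
    exact div_neg_of_pos_of_neg hnum hN'neg
  have Hp : ∀ l, lstar < l → 0 < Lp l := by
    intro l hl
    set s := Real.sqrt (l ^ 2 + 1) with hs_def
    have hs : 0 < s := Real.sqrt_pos.mpr (by positivity)
    have hs2 : s ^ 2 = l ^ 2 + 1 := Real.sq_sqrt (by positivity)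
    have hlabs : |l| < s := by
      rw [← Real.sqrt_sq_eq_abs, hs_def]
      exact Real.sqrt_lt_sqrt (sq_nonneg l) (by linarith)
    have hls1 : -s < l := (abs_lt.mp hlabs).1
    have hls2 : l < s := (abs_lt.mp hlabs).2
    have hc : 0 < ρ * s + l := by
      have h' := svi_sign_aux (-ρ) (-l) (by linarith) (by linarith)
        (by
          rw [hlstar] at hl
          have : -l < ρ / Real.sqrt (1 - ρ ^ 2) := by
            rw [neg_div] at hl; linarith
          calc -l < ρ / Real.sqrt (1 - ρ ^ 2) := this
            _ = -(-ρ) / Real.sqrt (1 - (-ρ) ^ 2) := by rw [neg_neg, neg_sq]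
        )
      rw [neg_sq] at h'
      rw [← hs_def] at h'
      linarith
    have hq : 0 < ρ * l + s := by
      have h1 : |ρ * l| < s := by
        rw [abs_mul]
        calc |ρ| * |l| ≤ 1 * |l| :=
              mul_le_mul_of_nonneg_right (abs_le.mpr ⟨hρ₁.le, hρ₂.le⟩) (abs_nonneg l)
          _ = |l| := one_mul _
          _ < s := hlabs
      have := (abs_lt.mp h1).1
      linarith
    have hNv : N l = α + b * (ρ * l + s) := hN l
    have hN'v : N' l = b * (ρ * s + l) / s := by
      rw [hN' l, ← hs_def]
      field_simp
      try ring
    have hN'pos : 0 < N' l := by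
      rw [hN'v]
      exact div_pos (mul_pos hb hc) hs
    have key : 0 < 2 * (α + b * (ρ * l + s)) * s
        - b * (ρ * s + l) * ((α + b * (ρ * l + s)) / 2 + l) := by
      have e1 : (0:ℝ) < s - l := by linarith
      have e2 : (0:ℝ) ≤ 2 - b * (1 + ρ) := by linarith
      have e3 : (0:ℝ) ≤ 4 * s - b * (ρ * s + l) := by
        nlinarith [mul_pos hb e1, mul_nonneg e2 hs.le]
      have hT1 : 0 ≤ α * (4 * s - b * (ρ * s + l)) := mul_nonneg hα e3
      have hT3 : 0 ≤ (2 - b * (1 + ρ)) * ((ρ * l + s) * (ρ * s + l)) :=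
        mul_nonneg (by linarith) (mul_nonneg hq.le hc.le)
      have identity : (1 + ρ) * (2 * (α + b * (ρ * l + s)) * s
            - b * (ρ * s + l) * ((α + b * (ρ * l + s)) / 2 + l))
          = (1 + ρ) * (α * (4 * s - b * (ρ * s + l))) / 2
            + b * ((1 - ρ) * (s - l) ^ 2 + 3 * (1 + ρ)
              + (2 - b * (1 + ρ)) * ((ρ * l + s) * (ρ * s + l))) / 2 := by
        linear_combination (3 / 2 * b * (1 + ρ)) * hs2
      nlinarith [identity, hT1, hT3,
        mul_nonneg (mul_nonneg hb.le (show (0:ℝ) ≤ 1 - ρ by linarith)) (sq_nonneg (s - l)),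
        mul_pos hb (show (0:ℝ) < 3 * (1 + ρ) by linarith),
        mul_nonneg hb.le hT3,
        mul_nonneg (show (0:ℝ) ≤ 1 + ρ by linarith) hT1]
    have hnum : 0 < 2 * N l - N' l * (N l / 2 + l) := by
      have heq : 2 * N l - N' l * (N l / 2 + l)
          = (2 * (α + b * (ρ * l + s)) * s
            - b * (ρ * s + l) * ((α + b * (ρ * l + s)) / 2 + l)) / s := by
        rw [hNv, hN'v]
        field_simp
      rw [heq]
      exact div_pos key hs
    have hN'ne : N' l ≠ 0 := ne_of_gt hN'pos
    have hLpv : Lp l = (2 * N l - N' l * (N l / 2 + l)) / N' l := by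
      rw [hLp l]
      field_simp
      ring
    rw [hLpv]
    exact div_pos hnum hN'pos
  refine ⟨Hm, Hp, ?_, ?_⟩
  · apply Real.sSup_le ?_ le_rfl
    rintro x ⟨l, hl, rfl⟩
    exact (Hm l hl).le
  · apply le_csInf ((Set.nonempty_Ioi).image Lp)
    rintro x ⟨l, hl, rfl⟩
    exact (Hp l hl).le
end

section
/- Let b > 0, ρ ∈ (−1,1), α ∈ ℝ with α + b√(1−ρ²) > 0, N(l) = α + b(ρl + √(l²+1)), l* = −ρ/√(1−ρ²), and G₂(l) = N''(l) − N'(l)²/(2N(l)). Then G₂ has exactly two zeros l₁, l₂, which satisfy l₁ < min(l*, 0) and l₂ > max(l*, 0); G₂(l) > 0 if and only if l₁ < l < l₂; G₂(l) < 0 for l < l₁ and for l > l₂; and lim_{l→±∞} G₂(l) = 0 (with G₂ negative near ±∞). -/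
open Real Filter Set

namespace G2aux

noncomputable def ss (l : ℝ) : ℝ := Real.sqrt (l^2+1)

lemma ss_pos (l : ℝ) : 0 < ss l := Real.sqrt_pos.2 (by positivity)
lemma ss_sq (l : ℝ) : ss l ^ 2 = l^2+1 := Real.sq_sqrt (by positivity)
lemma abs_le_ss (l : ℝ) : |l| ≤ ss l := by
  rw [← Real.sqrt_sq_eq_abs]; exact Real.sqrt_le_sqrt (by nlinarith)
lemma ss_le (l : ℝ) : ss l ≤ |l| + 1 := by
  rw [show |l| + 1 = Real.sqrt ((|l|+1)^2) by rw [Real.sqrt_sq (by positivity)]]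
  exact Real.sqrt_le_sqrt (by nlinarith [abs_nonneg l, sq_abs l])
lemma ss_neg (l : ℝ) : ss (-l) = ss l := by simp [ss]

lemma rpow_32 (l : ℝ) : (l^2+1) ^ ((3:ℝ)/2) = ss l ^ 3 := by
  have h : (0:ℝ) ≤ l^2+1 := by positivity
  rw [show ((3:ℝ)/2) = (1/2) * (3:ℕ) by push_cast; ring, Real.rpow_mul h,
    Real.rpow_natCast, ← Real.sqrt_eq_rpow]
  rfl

lemma hasDerivAt_ss (l : ℝ) : HasDerivAt ss (l / ss l) l := by
  have h1 : HasDerivAt (fun x : ℝ => x^2+1) (2*l) l := by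
    simpa using ((hasDerivAt_pow 2 l).add_const 1)
  have h2 := (Real.hasDerivAt_sqrt (by positivity : (l:ℝ)^2+1 ≠ 0)).comp l h1
  refine h2.congr_deriv ?_
  simp only [ss]
  field_simp

noncomputable def HH (b ρ α l : ℝ) : ℝ :=
  2*(α + b*(ρ*l + ss l)) - b * ss l * (ρ * ss l + l)^2

noncomputable def GG (b ρ α l : ℝ) : ℝ :=
  b / ss l ^ 3 - (b*(ρ + l / ss l))^2 / (2*(α + b*(ρ*l + ss l)))

lemma continuous_HH (b ρ α : ℝ) : Continuous (HH b ρ α) := by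
  unfold HH ss; fun_prop

lemma hasDerivAt_HH (b ρ α l : ℝ) :
    HasDerivAt (HH b ρ α) (-3*b*l*(ρ * ss l + l)^2 / ss l) l := by
  have hs := hasDerivAt_ss l
  have h1 : HasDerivAt (fun x => 2*(α + b*(ρ*x + ss x)))
      (2*(b*(ρ + l / ss l))) l := by
    simpa using (((hasDerivAt_id l).const_mul ρ |>.add hs).const_mul b |>.const_add α).const_mul 2
  have h2 : HasDerivAt (fun x => b * ss x * (ρ * ss x + x)^2)
      (b * (l / ss l) * (ρ * ss l + l)^2
        + b * ss l * (2 * (ρ * ss l + l) * (ρ * (l / ss l) + 1))) l := by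
    have ha : HasDerivAt (fun x => ρ * ss x + x) (ρ * (l / ss l) + 1) l :=
      (hs.const_mul ρ).add (hasDerivAt_id l)
    have hb : HasDerivAt (fun x => (ρ * ss x + x)^2)
        (2 * (ρ * ss l + l) * (ρ * (l / ss l) + 1)) l := by
      simpa [mul_comm, mul_assoc, mul_left_comm] using (ha.fun_pow 2)
    exact ((hs.const_mul b).mul hb)
  have := h1.fun_sub h2
  refine this.congr_deriv ?_
  have h0 := (ss_pos l).ne'
  have hq := ss_sq l
  field_simp
  linear_combination (-2*b*(ρ*ss l + l)) * hq

lemma HH_neg_arg (b ρ α l : ℝ) : HH b ρ α (-l) = HH b (-ρ) α l := by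
  unfold HH; rw [ss_neg]; ring

lemma GG_neg_arg (b ρ α l : ℝ) : GG b ρ α (-l) = GG b (-ρ) α l := by
  unfold GG; rw [ss_neg]
  have := (ss_pos l).ne'
  field_simp
  ring

lemma glue_anti {f : ℝ → ℝ} {c : ℝ} (hc : 0 ≤ c)
    (h1 : StrictAntiOn f (Icc 0 c)) (h2 : StrictAntiOn f (Ici c)) :
    StrictAntiOn f (Ici 0) := by
  intro x hx y hy hxy
  rcases le_or_gt y c with h | h
  · exact h1 ⟨hx, hxy.le.trans h⟩ ⟨hy, h⟩ hxy
  · rcases le_or_gt x c with h' | h'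
    · have fcy : f y < f c := h2 (self_mem_Ici) h.le h
      rcases eq_or_lt_of_le h' with rfl | h''
      · exact fcy
      · exact fcy.trans (h1 ⟨hx, h''.le⟩ ⟨hc, le_rfl⟩ h'')
    · exact h2 h'.le (h'.trans hxy).le hxy

section
variable {b ρ α : ℝ} (hb : 0 < b) (hρ₁ : -1 < ρ) (hρ₂ : ρ < 1)
  (hα : 0 < α + b * Real.sqrt (1 - ρ ^ 2))

include hb hρ₁ hρ₂ hα

lemma N_pos (l : ℝ) : 0 < α + b*(ρ*l + ss l) := by
  set t := Real.sqrt (1 - ρ^2) with ht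
  have ht2 : t^2 = 1 - ρ^2 := Real.sq_sqrt (by nlinarith)
  have h1 : ρ*l + ss l > 0 := by
    have hl : |ρ * l| ≤ |l| := by
      rw [abs_mul]
      nlinarith [abs_nonneg l, abs_nonneg ρ, abs_lt.2 ⟨hρ₁, hρ₂⟩]
    have : |l| < ss l := by
      nlinarith [abs_le_ss l, ss_sq l, sq_abs l, ss_pos l, abs_nonneg l]
    nlinarith [neg_abs_le (ρ*l)]
  have h2 : (ρ*l + ss l)^2 = t^2 + (ρ * ss l + l)^2 := by
    have := ss_sq l; nlinarith [this]
  have h3 : t ≤ ρ*l + ss l := by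
    nlinarith [Real.sqrt_nonneg (1-ρ^2), sq_nonneg (ρ * ss l + l)]
  nlinarith

lemma GG_eq (l : ℝ) :
    GG b ρ α l = (b / (2*(α + b*(ρ*l + ss l)) * ss l ^ 3)) * HH b ρ α l := by
  have hN := (N_pos hb hρ₁ hρ₂ hα l).ne'
  have hs := (ss_pos l).ne'
  have hq := ss_sq l
  unfold GG HH
  field_simp

lemma factor_pos (l : ℝ) : 0 < b / (2*(α + b*(ρ*l + ss l)) * ss l ^ 3) := by
  have hN := N_pos hb hρ₁ hρ₂ hα l
  have hs := ss_pos l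
  positivity

lemma GG_pos_iff (l : ℝ) : 0 < GG b ρ α l ↔ 0 < HH b ρ α l := by
  rw [GG_eq hb hρ₁ hρ₂ hα l]
  exact mul_pos_iff_of_pos_left (factor_pos hb hρ₁ hρ₂ hα l)

lemma GG_neg_iff (l : ℝ) : GG b ρ α l < 0 ↔ HH b ρ α l < 0 := by
  rw [GG_eq hb hρ₁ hρ₂ hα l]
  constructor
  · intro h
    by_contra hc
    exact absurd (mul_nonneg (factor_pos hb hρ₁ hρ₂ hα l).le (not_lt.1 hc)) (not_le.2 h)
  · intro h
    exact mul_neg_of_pos_of_neg (factor_pos hb hρ₁ hρ₂ hα l) h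

lemma GG_eq_zero_iff (l : ℝ) : GG b ρ α l = 0 ↔ HH b ρ α l = 0 := by
  rw [GG_eq hb hρ₁ hρ₂ hα l]
  simp [mul_eq_zero, (factor_pos hb hρ₁ hρ₂ hα l).ne']

lemma HH_zero_pos : 0 < HH b ρ α 0 := by
  have h0 : ss 0 = 1 := by simp [ss]
  have ht2 : Real.sqrt (1-ρ^2) ^ 2 = 1 - ρ^2 := Real.sq_sqrt (by nlinarith)
  unfold HH
  rw [h0]
  nlinarith [Real.sqrt_nonneg (1-ρ^2), sq_nonneg (1 - Real.sqrt (1-ρ^2))]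

lemma HH_lstar_pos : 0 < HH b ρ α (-ρ / Real.sqrt (1 - ρ^2)) := by
  set t := Real.sqrt (1-ρ^2) with ht
  have htpos : 0 < t := Real.sqrt_pos.2 (by nlinarith)
  have ht2 : t^2 = 1 - ρ^2 := Real.sq_sqrt (by nlinarith)
  have hs : ss (-ρ/t) = 1/t := by
    unfold ss
    rw [show (-ρ/t)^2 + 1 = (1/t)^2 by field_simp; nlinarith]
    exact Real.sqrt_sq (by positivity)
  have hzero : ρ * ss (-ρ/t) + (-ρ/t) = 0 := by rw [hs]; field_simp; ring
  unfold HH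
  rw [hzero, hs]
  have : ρ * (-ρ/t) + 1/t = t := by field_simp; nlinarith
  rw [this]
  simpa using hα

omit hα in
lemma HH_deriv_neg {l : ℝ} (hl : 0 < l) (hne : ρ * ss l + l ≠ 0) :
    deriv (HH b ρ α) l < 0 := by
  rw [(hasDerivAt_HH b ρ α l).deriv]
  have h2 : 0 < (ρ * ss l + l)^2 :=
    lt_of_le_of_ne (sq_nonneg _) (Ne.symm (pow_ne_zero 2 hne))
  exact div_neg_of_neg_of_pos (by nlinarith [mul_pos (mul_pos hb hl) h2]) (ss_pos l)

omit hα in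
lemma HH_anti : StrictAntiOn (HH b ρ α) (Ici 0) := by
  have hcont := (continuous_HH b ρ α).continuousOn (s := Ici 0)
  rcases le_or_gt 0 ρ with hρ | hρ
  · apply strictAntiOn_of_deriv_neg (convex_Ici 0) hcont
    intro x hx
    rw [interior_Ici] at hx
    have hne : ρ * ss x + x ≠ 0 := by
      have h := mul_nonneg hρ (ss_pos x).le
      have hx0 : (0:ℝ) < x := hx
      have : 0 < ρ * ss x + x := by linarith
      exact this.ne'
    exact HH_deriv_neg hb hρ₁ hρ₂ hx hne
  · set t := Real.sqrt (1-ρ^2) with hts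
    have htpos : 0 < t := Real.sqrt_pos.2 (by nlinarith)
    have ht2 : t^2 = 1-ρ^2 := Real.sq_sqrt (by nlinarith)
    set L := -ρ/t with hL
    have hLpos : 0 < L := div_pos (by linarith) htpos
    have key : ∀ x, 0 < x → x ≠ L → ρ * ss x + x ≠ 0 := by
      intro x hx hxL h
      apply hxL
      have hq := ss_sq x
      have h2 : ρ^2 * (x^2+1) = x^2 := by nlinarith [ss_pos x]
      have h3 : x^2 = L^2 := by rw [hL]; field_simp; nlinarith
      have h4 : (x - L) * (x + L) = 0 := by linear_combination h3
      rcases mul_eq_zero.1 h4 with h5 | h5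
      · linarith
      · linarith
    apply glue_anti hLpos.le
    · apply strictAntiOn_of_deriv_neg (convex_Icc 0 L)
        ((continuous_HH b ρ α).continuousOn)
      intro x hx
      rw [interior_Icc] at hx
      exact HH_deriv_neg hb hρ₁ hρ₂ hx.1 (key x hx.1 (ne_of_lt hx.2))
    · apply strictAntiOn_of_deriv_neg (convex_Ici L)
        ((continuous_HH b ρ α).continuousOn)
      intro x hx
      rw [interior_Ici] at hx
      exact HH_deriv_neg hb hρ₁ hρ₂ (hLpos.trans hx) (key x (hLpos.trans hx) (ne_of_gt hx))

omit hα in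
lemma HH_neg_point : ∃ T, 0 < T ∧ HH b ρ α T < 0 := by
  set c := b*(1+ρ)^2 with hc
  have hcpos : 0 < c := by
    have h1 : (0:ℝ) < 1 + ρ := by linarith
    rw [hc]; nlinarith [mul_pos h1 h1]
  set T := max 2 (max (Real.sqrt ((2*b+1)/c)) (2*|α|+1)) with hT
  have hT2 : (2:ℝ) ≤ T := le_max_left _ _
  have hTpos : (0:ℝ) < T := by linarith
  have hTq : Real.sqrt ((2*b+1)/c) ≤ T := le_trans (le_max_left _ _) (le_max_right _ _)
  have hTα : 2*|α|+1 ≤ T := le_trans (le_max_right _ _) (le_max_right _ _)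
  refine ⟨T, hTpos, ?_⟩
  have hs := ss_sq T
  have hsT : T ≤ ss T := le_trans (le_abs_self T) (abs_le_ss T)
  have hexp : HH b ρ α T = 2*α - 2*b*ρ*T^3 + b*ss T*(2-ρ^2-(1+ρ^2)*T^2) := by
    unfold HH
    linear_combination (-(2*b*ρ*T) - b*ρ^2*ss T) * hs
  have hfac : 2 - ρ^2 - (1+ρ^2)*T^2 ≤ -2 := by nlinarith [sq_nonneg ρ, sq_nonneg (ρ*T)]
  have h1 : b*(ss T - T)*(2-ρ^2-(1+ρ^2)*T^2) ≤ 0 := by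
    have := mul_nonneg (mul_nonneg hb.le (sub_nonneg.2 hsT))
      (by linarith : (0:ℝ) ≤ -(2-ρ^2-(1+ρ^2)*T^2))
    nlinarith
  have key : HH b ρ α T ≤ 2*α + 2*b*T - c*T^3 := by
    rw [hexp, hc]
    nlinarith [mul_nonneg (mul_nonneg hb.le hTpos.le) (sq_nonneg ρ)]
  have hq : (2*b+1)/c ≤ T^2 := by
    have h0 : (0:ℝ) ≤ (2*b+1)/c := by positivity
    calc (2*b+1)/c = Real.sqrt ((2*b+1)/c) ^ 2 := (Real.sq_sqrt h0).symm
      _ ≤ T^2 := by nlinarith [Real.sqrt_nonneg ((2*b+1)/c)]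
  have h2 : 2*b+1 ≤ c*T^2 := by
    rw [div_le_iff₀ hcpos] at hq; linarith
  have h3 : (2*b+1)*T ≤ c*T^3 := by nlinarith [mul_le_mul_of_nonneg_right h2 hTpos.le]
  nlinarith [le_abs_self α]

lemma GG_tendsto_atTop : Tendsto (GG b ρ α) atTop (nhds 0) := by
  have hs_top : Tendsto ss atTop atTop :=
    tendsto_atTop_mono (fun x => le_trans (le_abs_self x) (abs_le_ss x)) tendsto_id
  have h1 : Tendsto (fun l => b / ss l ^ 3) atTop (nhds 0) :=
    Tendsto.div_atTop tendsto_const_nhds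
      ((tendsto_pow_atTop (by norm_num : 3 ≠ 0)).comp hs_top)
  have hN_top : Tendsto (fun l => 2*(α + b*(ρ*l + ss l))) atTop atTop := by
    apply tendsto_atTop_mono' atTop
      (_ : ∀ᶠ l in atTop, α + b*(1+ρ)*l ≤ 2*(α + b*(ρ*l + ss l)))
    · exact tendsto_atTop_add_const_left _ α
        (Tendsto.const_mul_atTop (by nlinarith) tendsto_id)
    · filter_upwards [eventually_ge_atTop (0:ℝ)] with l hl
      have hsl : l ≤ ss l := le_trans (le_abs_self l) (abs_le_ss l)
      have hNl := N_pos hb hρ₁ hρ₂ hα l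
      nlinarith
  have hpiece : Tendsto
      (fun l => (b*(ρ + l / ss l))^2 / (2*(α + b*(ρ*l + ss l)))) atTop (nhds 0) := by
    apply squeeze_zero' (g := fun l => (4*b^2) / (2*(α + b*(ρ*l + ss l))))
    · filter_upwards with l
      exact div_nonneg (sq_nonneg _) (by nlinarith [N_pos hb hρ₁ hρ₂ hα l])
    · filter_upwards with l
      have hNl := N_pos hb hρ₁ hρ₂ hα l
      rw [div_le_div_iff_of_pos_right (by linarith : (0:ℝ) < 2*(α + b*(ρ*l + ss l)))]
      have hx2 : (l/ss l)^2 ≤ 1 := by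
        rw [div_pow, ss_sq]
        exact div_le_one_of_le₀ (by linarith) (by positivity)
      have hρsq : ρ^2 ≤ 1 := by nlinarith
      nlinarith [sq_nonneg (ρ - l/ss l), sq_nonneg b, sq_nonneg (b*(ρ + l/ss l))]
    · exact Tendsto.div_atTop tendsto_const_nhds hN_top
  have := h1.sub hpiece
  rw [sub_zero] at this; exact this

end
end G2aux

/-- Zeros of `G₂`: `G₂(l) = N''(l) − N'(l)²/(2N(l))` has exactly
two zeros `l₁ < min(l*, 0)` and `l₂ > max(l*, 0)`; it is positive exactly on
`(l₁, l₂)`, negative outside `[l₁, l₂]`, and tends to `0` at `±∞`. -/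
theorem G2_zeros
    (b ρ α : ℝ) (hb : 0 < b) (hρ₁ : -1 < ρ) (hρ₂ : ρ < 1)
    (hα : 0 < α + b * Real.sqrt (1 - ρ ^ 2))
    (lstar : ℝ) (hlstar : lstar = -ρ / Real.sqrt (1 - ρ ^ 2))
    (N N' N'' G₂ : ℝ → ℝ)
    (hN : ∀ l, N l = α + b * (ρ * l + Real.sqrt (l ^ 2 + 1)))
    (hN' : ∀ l, N' l = b * (ρ + l / Real.sqrt (l ^ 2 + 1)))
    (hN'' : ∀ l, N'' l = b / (l ^ 2 + 1) ^ ((3 : ℝ) / 2))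
    (hG₂ : ∀ l, G₂ l = N'' l - (N' l) ^ 2 / (2 * N l)) :
    ∃ l₁ l₂ : ℝ,
      l₁ < min lstar 0 ∧ max lstar 0 < l₂ ∧
      (∀ l, G₂ l = 0 ↔ l = l₁ ∨ l = l₂) ∧
      (∀ l, 0 < G₂ l ↔ l₁ < l ∧ l < l₂) ∧
      (∀ l, l < l₁ → G₂ l < 0) ∧
      (∀ l, l₂ < l → G₂ l < 0) ∧
      Filter.Tendsto G₂ Filter.atTop (nhds 0) ∧
      Filter.Tendsto G₂ Filter.atBot (nhds 0) := by
  have hρ₁' : -1 < -ρ := by linarith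
  have hρ₂' : -ρ < 1 := by linarith
  have hα' : 0 < α + b * Real.sqrt (1 - (-ρ) ^ 2) := by rw [neg_sq]; exact hα
  have hGG : ∀ l, G₂ l = G2aux.GG b ρ α l := by
    intro l
    rw [hG₂, hN, hN', hN'', G2aux.rpow_32]
    rfl
  have hrefl : ∀ l, G2aux.HH b ρ α l = G2aux.HH b (-ρ) α (-l) := fun l => by
    simpa using G2aux.HH_neg_arg b ρ α (-l)
  have hanti := G2aux.HH_anti hb hρ₁ hρ₂ (α := α)
  have hanti' := G2aux.HH_anti hb hρ₁' hρ₂' (α := α)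
  have hmono : StrictMonoOn (G2aux.HH b ρ α) (Set.Iic 0) := by
    intro x hx y hy hxy
    have h := hanti' (Set.mem_Ici.2 (neg_nonneg.2 (Set.mem_Iic.1 hy)))
      (Set.mem_Ici.2 (neg_nonneg.2 (Set.mem_Iic.1 hx))) (neg_lt_neg hxy)
    rwa [← hrefl x, ← hrefl y] at h
  have h0pos : 0 < G2aux.HH b ρ α 0 := G2aux.HH_zero_pos hb hρ₁ hρ₂ hα
  have hstar : 0 < G2aux.HH b ρ α lstar := by
    rw [hlstar]; exact G2aux.HH_lstar_pos hb hρ₁ hρ₂ hα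
  obtain ⟨T, hTpos, hTneg⟩ := G2aux.HH_neg_point hb hρ₁ hρ₂ (α := α)
  obtain ⟨T', hT'pos, hT'neg⟩ := G2aux.HH_neg_point hb hρ₁' hρ₂' (α := α)
  obtain ⟨l₂, hl₂mem, hl₂⟩ := intermediate_value_Ioo' hTpos.le
    ((G2aux.continuous_HH b ρ α).continuousOn) ⟨hTneg, h0pos⟩
  obtain ⟨r, hrmem, hr⟩ := intermediate_value_Ioo' hT'pos.le
    ((G2aux.continuous_HH b (-ρ) α).continuousOn)
      ⟨hT'neg, G2aux.HH_zero_pos hb hρ₁' hρ₂' hα'⟩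
  have hl₂0 : 0 < l₂ := hl₂mem.1
  have hr0 : 0 < r := hrmem.1
  have hH1 : G2aux.HH b ρ α (-r) = 0 := by rw [hrefl (-r), neg_neg]; exact hr
  have hl₁0 : -r < 0 := by linarith
  refine ⟨-r, l₂, ?_, ?_, ?_, ?_, ?_, ?_, ?_, ?_⟩
  · -- -r < min lstar 0
    rcases le_or_gt 0 lstar with h | h
    · rw [min_eq_right h]; exact hl₁0
    · rw [min_eq_left h.le]
      by_contra hcon
      rcases (not_lt.1 hcon).lt_or_eq with hlt | heq
      · have := hmono (Set.mem_Iic.2 h.le) (Set.mem_Iic.2 hl₁0.le) hlt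
        rw [hH1] at this; linarith
      · rw [heq, hH1] at hstar; exact absurd hstar (lt_irrefl 0)
  · -- max lstar 0 < l₂
    rcases le_or_gt lstar 0 with h | h
    · rw [max_eq_right h]; exact hl₂0
    · rw [max_eq_left h.le]
      by_contra hcon
      rcases (not_lt.1 hcon).lt_or_eq with hlt | heq
      · have := hanti (Set.mem_Ici.2 hl₂0.le) (Set.mem_Ici.2 h.le) hlt
        rw [hl₂] at this; linarith
      · rw [← heq, hl₂] at hstar; exact absurd hstar (lt_irrefl 0)
  · intro l
    rw [hGG l, G2aux.GG_eq_zero_iff hb hρ₁ hρ₂ hα]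
    constructor
    · intro h
      rcases le_or_gt l 0 with hl | hl
      · exact Or.inl (hmono.injOn (Set.mem_Iic.2 hl) (Set.mem_Iic.2 hl₁0.le)
          (by rw [h, hH1]))
      · exact Or.inr (hanti.injOn (Set.mem_Ici.2 hl.le) (Set.mem_Ici.2 hl₂0.le)
          (by rw [h, hl₂]))
    · rintro (rfl | rfl)
      exacts [hH1, hl₂]
  · intro l
    rw [hGG l, G2aux.GG_pos_iff hb hρ₁ hρ₂ hα]
    constructor
    · intro h
      constructor
      · by_contra hc
        rcases (not_lt.1 hc).lt_or_eq with hlt | heq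
        · have := hmono (Set.mem_Iic.2 (by linarith : l ≤ 0)) (Set.mem_Iic.2 hl₁0.le) hlt
          rw [hH1] at this; linarith
        · rw [heq, hH1] at h; exact absurd h (lt_irrefl 0)
      · by_contra hc
        rcases (not_lt.1 hc).lt_or_eq with hlt | heq
        · have := hanti (Set.mem_Ici.2 hl₂0.le) (Set.mem_Ici.2 (by linarith : 0 ≤ l)) hlt
          rw [hl₂] at this; linarith
        · rw [← heq, hl₂] at h; exact absurd h (lt_irrefl 0)
    · rintro ⟨h1, h2⟩
      rcases le_or_gt l 0 with hl | hl
      · have := hmono (Set.mem_Iic.2 hl₁0.le) (Set.mem_Iic.2 hl) h1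
        rwa [hH1] at this
      · have := hanti (Set.mem_Ici.2 hl.le) (Set.mem_Ici.2 hl₂0.le) h2
        rwa [hl₂] at this
  · intro l hl
    rw [hGG l, G2aux.GG_neg_iff hb hρ₁ hρ₂ hα]
    have := hmono (Set.mem_Iic.2 (by linarith : l ≤ 0)) (Set.mem_Iic.2 hl₁0.le) hl
    rwa [hH1] at this
  · intro l hl
    rw [hGG l, G2aux.GG_neg_iff hb hρ₁ hρ₂ hα]
    have := hanti (Set.mem_Ici.2 (by linarith : (0:ℝ) ≤ l₂)) (Set.mem_Ici.2 (by linarith : (0:ℝ) ≤ l)) hl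
    rwa [hl₂] at this
  · exact (G2aux.GG_tendsto_atTop hb hρ₁ hρ₂ hα).congr (fun l => (hGG l).symm)
  · have h1 := (G2aux.GG_tendsto_atTop hb hρ₁' hρ₂' hα').comp tendsto_neg_atBot_atTop
    refine h1.congr fun l => ?_
    have h2 := G2aux.GG_neg_arg b (-ρ) α l
    rw [neg_neg] at h2
    simp only [Function.comp_apply]
    rw [h2, ← hGG l]
end

section
/- Let b > 0, ρ ∈ (−1,1), α ∈ ℝ with α + b√(1−ρ²) > 0, N(l) = α + b(ρl + √(l²+1)), σ > 0, μ ∈ ℝ, and set w(k) = σN(k/σ − μ). Define f₁(k) = k/√(w(k)) − √(w(k))/2 and f₂(k) = k/√(w(k)) + √(w(k))/2. Then for every l ∈ ℝ, with k = σ(l+μ): f₁'(k)·√(σN(l)) = 1 − N'(l)((l+μ)/(2N(l)) + 1/4) and f₂'(k)·√(σN(l)) = 1 − N'(l)((l+μ)/(2N(l)) − 1/4). In particular, the Fukasawa conditions f₁' > 0 and f₂' > 0 hold everywhere if and only if both factors G₁₊(l) = 1 − N'(l)((l+μ)/(2N(l)) + 1/4) and G₁₋(l) = 1 − N'(l)((l+μ)/(2N(l))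 − 1/4) are positive for all l. -/
lemma alg_aux₁ (s nl n' σ l μ : ℝ) (hs : s ≠ 0) (hnl : nl ≠ 0)
    (h2 : s^2 = σ*nl) :
    ((s - σ*(l+μ)*(n'/(2*s)))/s^2 - (n'/(2*s))/2) * s
      = 1 - n'*((l+μ)/(2*nl) + 1/4) := by
  field_simp
  linear_combination (8*n'*(l+μ)) * h2

lemma alg_aux₂ (s nl n' σ l μ : ℝ) (hs : s ≠ 0) (hnl : nl ≠ 0)
    (h2 : s^2 = σ*nl) :
    ((s - σ*(l+μ)*(n'/(2*s)))/s^2 + (n'/(2*s))/2) * s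
      = 1 - n'*((l+μ)/(2*nl) - 1/4) := by
  field_simp
  linear_combination (8*n'*(l+μ)) * h2

/-- for the SVI smile `w(k) = σN(k/σ − μ)` and
`f₁(k) = k/√w − √w/2`, `f₂(k) = k/√w + √w/2`, one has
`f₁'(k)·√(σN(l)) = G₁₊(l)` and `f₂'(k)·√(σN(l)) = G₁₋(l)` at `k = σ(l+μ)`;
in particular the Fukasawa conditions `f₁' > 0`, `f₂' > 0` hold everywhere iff
`G₁₊` and `G₁₋` are positive everywhere. -/
theorem fukasawa_factors_identity
    (b ρ α σ μ : ℝ) (hb : 0 < b) (hρ₁ : -1 < ρ) (hρ₂ : ρ < 1)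
    (hα : 0 < α + b * Real.sqrt (1 - ρ ^ 2)) (hσ : 0 < σ)
    (N N' w f₁ f₂ G₁p G₁m : ℝ → ℝ)
    (hN : ∀ l, N l = α + b * (ρ * l + Real.sqrt (l ^ 2 + 1)))
    (hN' : ∀ l, N' l = b * (ρ + l / Real.sqrt (l ^ 2 + 1)))
    (hw : ∀ k, w k = σ * N (k / σ - μ))
    (hf₁ : ∀ k, f₁ k = k / Real.sqrt (w k) - Real.sqrt (w k) / 2)
    (hf₂ : ∀ k, f₂ k = k / Real.sqrt (w k) + Real.sqrt (w k) / 2)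
    (hG₁p : ∀ l, G₁p l = 1 - N' l * ((l + μ) / (2 * N l) + 1 / 4))
    (hG₁m : ∀ l, G₁m l = 1 - N' l * ((l + μ) / (2 * N l) - 1 / 4)) :
    (∀ l : ℝ,
      deriv f₁ (σ * (l + μ)) * Real.sqrt (σ * N l) = G₁p l ∧
      deriv f₂ (σ * (l + μ)) * Real.sqrt (σ * N l) = G₁m l) ∧
    ((∀ k : ℝ, 0 < deriv f₁ k ∧ 0 < deriv f₂ k) ↔
      (∀ l : ℝ, 0 < G₁p l ∧ 0 < G₁m l)) := by
  have hσne : σ ≠ 0 := hσ.ne'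
  have hρsq : (0:ℝ) < 1 - ρ^2 := by nlinarith
  -- positivity of N
  have hNpos : ∀ l, 0 < N l := by
    intro l
    rw [hN]
    set s := Real.sqrt (l^2+1) with hsdef
    set t := Real.sqrt (1-ρ^2) with htdef
    have hs0 : 0 < s := Real.sqrt_pos.2 (by positivity)
    have hs : s^2 = l^2+1 := Real.sq_sqrt (by positivity)
    have ht0 : 0 ≤ t := Real.sqrt_nonneg _
    have ht : t^2 = 1-ρ^2 := Real.sq_sqrt hρsq.le
    have hkey : t ≤ ρ*l + s := by
      have hpos : 0 < ρ*l + s := by nlinarith [sq_nonneg (ρ*l + s), sq_nonneg (ρ*l - s)]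
      nlinarith [sq_nonneg (s*ρ + l), sq_nonneg (ρ*l + s - t), sq_nonneg (ρ*l + s + t)]
    nlinarith
  have hwpos : ∀ k, 0 < w k := fun k => (hw k) ▸ mul_pos hσ (hNpos _)
  -- derivative of N
  have hNd : ∀ l, HasDerivAt N (N' l) l := by
    intro l
    have hsd : HasDerivAt (fun x : ℝ => Real.sqrt (x^2+1)) (l / Real.sqrt (l^2+1)) l := by
      have h1 : HasDerivAt (fun x : ℝ => x^2+1) (2*l) l := by
        simpa using (hasDerivAt_pow 2 l).add_const 1
      have h2 := (Real.hasDerivAt_sqrt (by positivity : (l^2+1:ℝ) ≠ 0)).comp l h1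
      have hne : Real.sqrt (l^2+1) ≠ 0 := (Real.sqrt_pos.2 (by positivity)).ne'
      refine h2.congr_deriv ?_
      field_simp
    have h : HasDerivAt (fun x : ℝ => α + b*(ρ*x + Real.sqrt (x^2+1)))
        (b*(ρ + l/Real.sqrt (l^2+1))) l := by
      have h0 := ((((hasDerivAt_id l).const_mul ρ).add hsd).const_mul b).const_add α
      refine h0.congr_deriv ?_
      ring
    rw [hN']
    exact h.congr_of_eventuallyEq (Filter.Eventually.of_forall (by intro x; rw [hN]))
  -- derivative of w
  have hwd : ∀ k, HasDerivAt w (N' (k/σ - μ)) k := by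
    intro k
    have hin : HasDerivAt (fun k : ℝ => k/σ - μ) (1/σ) k := by
      simpa using ((hasDerivAt_id k).div_const σ).sub_const μ
    have h := ((hNd (k/σ-μ)).comp k hin).const_mul σ
    have heq : σ * (N' (k/σ - μ) * (1/σ)) = N' (k/σ-μ) := by field_simp
    rw [heq] at h
    exact h.congr_of_eventuallyEq (Filter.Eventually.of_forall hw)
  -- derivative of sqrt ∘ w
  have hsqd : ∀ k, HasDerivAt (fun k => Real.sqrt (w k))
      (N' (k/σ-μ) / (2 * Real.sqrt (w k))) k := by
    intro k
    have h := (Real.hasDerivAt_sqrt (hwpos k).ne').comp k (hwd k)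
    refine h.congr_deriv ?_
    ring
  have hsne : ∀ k, Real.sqrt (w k) ≠ 0 := fun k => (Real.sqrt_pos.2 (hwpos k)).ne'
  -- derivatives of f₁ f₂
  have hf₁d : ∀ k, HasDerivAt f₁
      ((Real.sqrt (w k) - k * (N' (k/σ-μ) / (2 * Real.sqrt (w k)))) / (Real.sqrt (w k))^2
        - (N' (k/σ-μ) / (2 * Real.sqrt (w k)))/2) k := by
    intro k
    have h1 := (hasDerivAt_id' (x := k)).div (hsqd k) (hsne k)
    rw [one_mul] at h1
    exact (h1.sub ((hsqd k).div_const 2)).congr_of_eventuallyEq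
      (Filter.Eventually.of_forall hf₁)
  have hf₂d : ∀ k, HasDerivAt f₂
      ((Real.sqrt (w k) - k * (N' (k/σ-μ) / (2 * Real.sqrt (w k)))) / (Real.sqrt (w k))^2
        + (N' (k/σ-μ) / (2 * Real.sqrt (w k)))/2) k := by
    intro k
    have h1 := (hasDerivAt_id' (x := k)).div (hsqd k) (hsne k)
    rw [one_mul] at h1
    exact (h1.add ((hsqd k).div_const 2)).congr_of_eventuallyEq
      (Filter.Eventually.of_forall hf₂)
  -- main identity
  have main : ∀ l : ℝ,
      deriv f₁ (σ * (l + μ)) * Real.sqrt (σ * N l) = G₁p l ∧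
      deriv f₂ (σ * (l + μ)) * Real.sqrt (σ * N l) = G₁m l := by
    intro l
    set k := σ * (l + μ) with hkdef
    have hk : k/σ - μ = l := by field_simp [hkdef]; rw [hkdef]; ring
    have hwk : w k = σ * N l := by rw [hw, hk]
    have hNlne : N l ≠ 0 := (hNpos l).ne'
    have hsne' : Real.sqrt (σ * N l) ≠ 0 := (Real.sqrt_pos.2 (mul_pos hσ (hNpos l))).ne'
    have hs2 : (Real.sqrt (σ * N l))^2 = σ * N l := Real.sq_sqrt (mul_pos hσ (hNpos l)).le
    constructor
    · rw [(hf₁d k).deriv, hk, hwk, hG₁p, hkdef]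
      exact alg_aux₁ _ _ _ _ _ _ hsne' hNlne hs2
    · rw [(hf₂d k).deriv, hk, hwk, hG₁m, hkdef]
      exact alg_aux₂ _ _ _ _ _ _ hsne' hNlne hs2
  refine ⟨main, ?_⟩
  constructor
  · intro h l
    obtain ⟨h1, h2⟩ := h (σ * (l + μ))
    obtain ⟨e1, e2⟩ := main l
    have hspos : 0 < Real.sqrt (σ * N l) := Real.sqrt_pos.2 (mul_pos hσ (hNpos l))
    exact ⟨e1 ▸ mul_pos h1 hspos, e2 ▸ mul_pos h2 hspos⟩
  · intro h k
    set l := k/σ - μ with hldef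
    have hkl : σ * (l + μ) = k := by rw [hldef]; field_simp; ring
    obtain ⟨hg1, hg2⟩ := h l
    obtain ⟨e1, e2⟩ := main l
    rw [hkl] at e1 e2
    have hspos : 0 < Real.sqrt (σ * N l) := Real.sqrt_pos.2 (mul_pos hσ (hNpos l))
    constructor
    · nlinarith [e1, hg1, hspos]
    · nlinarith [e2, hg2, hspos]
end
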